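/- arXiv:2510.09324 — 7 statements merged into one kernel-verified Lean document; each statement's English description precedes it below -/
import Mathlib

section
/- Every submodule V of O_r^d is isomorphic (via an element of GL_d(O_r)) to a module of the form O_r^m × p^{k_1} × ... × p^{k_{n-m}} × 0^{d-n} for some 0 ≤ m ≤ n ≤ d and 0 < k_1 ≤ ... ≤ k_{n-m} < r. -/
open Ideal Submodule

namespace SNFAux

variable {A : Type*} [CommRing A]

lemma pow_stab_bot {m : Ideal A} {r : ℕ} (hm0 : m ^ r = ⊥) {k : ℕ}
    (h : m ^ k = m ^ (k + 1)) : m ^ k = ⊥ := by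
  have hj : ∀ j, m ^ k = m ^ (k + j) := by
    intro j
    induction j with
    | zero => rfl
    | succ j ih =>
      calc m ^ k = m ^ (k + 1) := h
        _ = m ^ k * m := by rw [pow_succ]
        _ = m ^ (k + j) * m := by rw [← ih]
        _ = m ^ (k + j + 1) := (pow_succ m (k + j)).symm
  refine le_bot_iff.mp ?_
  calc m ^ k = m ^ (k + r) := hj r
    _ ≤ m ^ r := Ideal.pow_le_pow_right (by omega)
    _ = ⊥ := hm0

/-- Extend a linear endomorphism of `Fin n → A` to `Fin (n+1) → A` acting as identity on
coordinate `0`. -/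
def consL {n : ℕ} (h : (Fin n → A) →ₗ[A] (Fin n → A)) :
    (Fin (n + 1) → A) →ₗ[A] (Fin (n + 1) → A) :=
  LinearMap.pi (Fin.cases (LinearMap.proj 0)
    (fun j => (LinearMap.proj j).comp (h.comp (LinearMap.funLeft A A Fin.succ))))

@[simp] lemma consL_zero {n : ℕ} (h : (Fin n → A) →ₗ[A] (Fin n → A)) (x : Fin (n + 1) → A) :
    consL h x 0 = x 0 := by
  simp [consL]

@[simp] lemma consL_succ {n : ℕ} (h : (Fin n → A) →ₗ[A] (Fin n → A)) (x : Fin (n + 1) → A)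
    (j : Fin n) : consL h x j.succ = h (fun t => x t.succ) j := by
  simp only [consL, LinearMap.pi_apply, Fin.cases_succ, LinearMap.coe_comp,
    Function.comp_apply, LinearMap.proj_apply]
  rfl

/-- Extend a linear automorphism of `Fin n → A` to `Fin (n+1) → A` acting as identity on
coordinate `0`. -/
def consE {n : ℕ} (e : (Fin n → A) ≃ₗ[A] (Fin n → A)) :
    (Fin (n + 1) → A) ≃ₗ[A] (Fin (n + 1) → A) :=
  LinearEquiv.ofLinear (consL (e : (Fin n → A) →ₗ[A] (Fin n → A)))
    (consL (e.symm : (Fin n → A) →ₗ[A] (Fin n → A)))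
    (LinearMap.ext fun x => funext fun j => by
      refine Fin.cases ?_ (fun j => ?_) j <;> simp)
    (LinearMap.ext fun x => funext fun j => by
      refine Fin.cases ?_ (fun j => ?_) j <;> simp)

@[simp] lemma consE_zero {n : ℕ} (e : (Fin n → A) ≃ₗ[A] (Fin n → A)) (x : Fin (n + 1) → A) :
    consE e x 0 = x 0 := by
  simp [consE]

@[simp] lemma consE_succ {n : ℕ} (e : (Fin n → A) ≃ₗ[A] (Fin n → A)) (x : Fin (n + 1) → A)
    (j : Fin n) : consE e x j.succ = e (fun t => x t.succ) j := by
  simp [consE]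

lemma map_funCongrLeft_pi {d : ℕ} (σ : Equiv.Perm (Fin d)) (I : Fin d → Ideal A) :
    Submodule.map ((LinearEquiv.funCongrLeft A A σ) : (Fin d → A) →ₗ[A] (Fin d → A))
      (Submodule.pi Set.univ (fun i => (I i : Submodule A A))) =
    Submodule.pi Set.univ (fun i => (I (σ i) : Submodule A A)) := by
  ext x
  rw [Submodule.mem_map_equiv, Submodule.mem_pi, Submodule.mem_pi]
  simp only [LinearEquiv.funCongrLeft_symm, LinearEquiv.funCongrLeft_apply,
    LinearMap.funLeft_apply, Set.mem_univ, true_implies]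
  constructor
  · intro h i
    have := h (σ i)
    rwa [Equiv.symm_apply_apply] at this
  · intro h j
    have := h (σ.symm j)
    rwa [Equiv.apply_symm_apply] at this

lemma key {r : ℕ} {π : A} {m : Ideal A}
    (hπ : Ideal.span {π} = m) (hm0 : m ^ r = ⊥)
    (hcls : ∀ x : A, ∃ k, k ≤ r ∧ Ideal.span {x} = m ^ k) :
    ∀ (d : ℕ) (V : Submodule A (Fin d → A)),
      ∃ (g : (Fin d → A) ≃ₗ[A] (Fin d → A)) (k : Fin d → ℕ),
        (∀ i, k i ≤ r) ∧
          Submodule.map (g : (Fin d → A) →ₗ[A] (Fin d → A)) V =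
            Submodule.pi Set.univ (fun i => (m ^ k i : Ideal A)) := by
  intro d
  induction d with
  | zero =>
    intro V
    refine ⟨LinearEquiv.refl A _, fun _ => r, fun _ => le_rfl, ?_⟩
    ext x
    have hx : x = 0 := funext fun i => i.elim0
    subst hx
    simp [Submodule.mem_pi]
  | succ n ih =>
    intro V
    by_cases hS : {K : ℕ | m ^ K ≠ ⊥ ∧ ∃ v ∈ V, ∃ i, Ideal.span {v i} = m ^ K}.Nonempty
    · -- nontrivial case
      set S := {K : ℕ | m ^ K ≠ ⊥ ∧ ∃ v ∈ V, ∃ i, Ideal.span {v i} = m ^ K} with hSdef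
      set K := sInf S with hKdef
      obtain ⟨hKne, v, hv, i, hvi⟩ := Nat.sInf_mem hS
      have hKr : K < r := by
        by_contra hc
        push_neg at hc
        exact hKne (le_bot_iff.mp (hm0 ▸ Ideal.pow_le_pow_right hc))
      have hVpi : ∀ w ∈ V, ∀ j, w j ∈ m ^ K := by
        intro w hw j
        obtain ⟨l, hlr, hsp⟩ := hcls (w j)
        by_cases hb : m ^ l = ⊥
        · have : w j = 0 := by
            simpa [Ideal.span_singleton_eq_bot] using hsp.trans hb
          simp [this]
        · have hKl : K ≤ l := Nat.sInf_le ⟨hb, w, hw, j, hsp⟩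
          exact Ideal.pow_le_pow_right hKl (hsp ▸ Ideal.mem_span_singleton_self (w j))
      have hspK : Ideal.span {π ^ K} = m ^ K := by
        rw [← Ideal.span_singleton_pow, hπ]
      choose c hc using fun j => Ideal.mem_span_singleton'.mp (hspK ▸ hVpi v hv j)
      have hcu : IsUnit (c i) := by
        by_contra hcu
        obtain ⟨l, hlr, hcl⟩ := hcls (c i)
        have hl1 : l ≠ 0 := by
          intro h0
          rw [h0, pow_zero, Ideal.one_eq_top] at hcl
          exact hcu (Ideal.span_singleton_eq_top.mp hcl)
        have hci : c i ∈ Ideal.span {π} := by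
          rw [hπ]
          exact Ideal.pow_le_self hl1 (hcl ▸ Ideal.mem_span_singleton_self (c i))
        obtain ⟨t, ht⟩ := Ideal.mem_span_singleton'.mp hci
        have hviK : v i ∈ m ^ (K + 1) := by
          have hsp1 : Ideal.span {π ^ (K + 1)} = m ^ (K + 1) := by
            rw [← Ideal.span_singleton_pow, hπ]
          rw [← hc i, ← ht]
          have heq : t * π * π ^ K = t * π ^ (K + 1) := by ring
          rw [heq]
          exact Ideal.mul_mem_left _ t (hsp1 ▸ Ideal.mem_span_singleton_self _)
        have h1 : m ^ K ≤ m ^ (K + 1) := by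
          rw [← hvi]
          exact (Ideal.span_singleton_le_iff_mem _).mpr hviK
        have h2 : m ^ (K + 1) ≤ m ^ K := Ideal.pow_le_pow_right (Nat.le_succ K)
        exact hKne (pow_stab_bot hm0 (le_antisymm h1 h2))
      -- the shear automorphism
      have h1 : (↑hcu.unit⁻¹ : A) * c i = 1 := hcu.val_inv_mul
      set u : Fin (n + 1) → A := (↑hcu.unit⁻¹ : A) • c - Pi.single i 1 with hu_def
      have hui : u i = 0 := by
        simp only [hu_def, Pi.sub_apply, Pi.smul_apply, smul_eq_mul, Pi.single_eq_same, h1,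
          sub_self]
      set N : (Fin (n + 1) → A) →ₗ[A] (Fin (n + 1) → A) :=
        (LinearMap.proj i : (Fin (n + 1) → A) →ₗ[A] A).smulRight u with hN_def
      have hNapp : ∀ x : Fin (n + 1) → A, N x = x i • u := fun x => by
        simp [hN_def, LinearMap.smulRight_apply]
      have hNN : ∀ x : Fin (n + 1) → A, N (N x) = 0 := by
        intro x
        rw [hNapp, hNapp]
        simp [hui]
      set T : (Fin (n + 1) → A) ≃ₗ[A] (Fin (n + 1) → A) :=
        LinearEquiv.ofLinear (LinearMap.id - N) (LinearMap.id + N)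
          (LinearMap.ext fun x => by
            simp only [LinearMap.coe_comp, Function.comp_apply, LinearMap.add_apply,
              LinearMap.sub_apply, LinearMap.id_apply, map_add, hNN, add_zero]
            abel)
          (LinearMap.ext fun x => by
            simp only [LinearMap.coe_comp, Function.comp_apply, LinearMap.add_apply,
              LinearMap.sub_apply, LinearMap.id_apply, map_sub, hNN, sub_zero]
            abel) with hT_def
      set sw := Equiv.swap (0 : Fin (n + 1)) i with hsw_def
      set g : (Fin (n + 1) → A) ≃ₗ[A] (Fin (n + 1) → A) :=
        T ≪≫ₗ LinearEquiv.funCongrLeft A A sw with hg_def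
      have happ : ∀ (x : Fin (n + 1) → A) (j : Fin (n + 1)),
          g x j = x (sw j) - x i * u (sw j) := by
        intro x j
        simp only [hg_def, LinearEquiv.trans_apply, LinearEquiv.funCongrLeft_apply,
          LinearMap.funLeft_apply, hT_def, LinearEquiv.ofLinear_apply, LinearMap.sub_apply,
          LinearMap.id_apply, Pi.sub_apply, hNapp, Pi.smul_apply, smul_eq_mul]
      have hs : ∀ j : Fin (n + 1), (Pi.single i (1 : A) : Fin (n + 1) → A) (sw j) = (Pi.single 0 (1 : A) : Fin (n + 1) → A) j := by
        intro j
        by_cases hj : j = 0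
        · rw [hj, hsw_def, Equiv.swap_apply_left, Pi.single_eq_same, Pi.single_eq_same]
        · have hne : sw j ≠ i := by
            intro h
            apply hj
            rwa [hsw_def, Equiv.swap_apply_eq_iff, Equiv.swap_apply_right] at h
          simp [Pi.single_eq_of_ne hne, Pi.single_eq_of_ne hj]
      set b : A := c i * π ^ K with hb_def
      have hgv : g v = b • (Pi.single 0 1 : Fin (n + 1) → A) := by
        funext j
        rw [happ v j, ← hc (sw j), ← hc i]
        simp only [hu_def, Pi.sub_apply, Pi.smul_apply, smul_eq_mul, hs j, Pi.smul_apply,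
          smul_eq_mul, hb_def]
        linear_combination (-(c (sw j) * π ^ K)) * h1
      set W := Submodule.map (g : (Fin (n + 1) → A) →ₗ[A] (Fin (n + 1) → A)) V with hW_def
      have hbW : b • (Pi.single 0 1 : Fin (n + 1) → A) ∈ W := ⟨v, hv, hgv⟩
      have hspanb : Ideal.span {b} = m ^ K := by
        rw [hb_def, Ideal.span_singleton_mul_left_unit hcu, hspK]
      have hWpi : ∀ w ∈ W, ∀ j, w j ∈ m ^ K := by
        rintro w ⟨x, hx, rfl⟩ j
        simp only [LinearEquiv.coe_coe]
        rw [happ x j]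
        exact sub_mem (hVpi x hx _) (Ideal.mul_mem_right _ _ (hVpi x hx i))
      -- the tail submodule
      set W' := Submodule.map (LinearMap.funLeft A A (Fin.succ : Fin n → Fin (n + 1)))
        (W ⊓ LinearMap.ker (LinearMap.proj 0 : (Fin (n + 1) → A) →ₗ[A] A)) with hW'_def
      obtain ⟨g', k', hk'r, hg'⟩ := ih W'
      refine ⟨g ≪≫ₗ consE g', Fin.cons K k', ?_, ?_⟩
      · intro j
        refine Fin.cases ?_ (fun j' => ?_) j
        · simpa using hKr.le
        · simpa using hk'r j'
      · have hcomp : Submodule.map ((g ≪≫ₗ consE g') :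
            (Fin (n + 1) → A) →ₗ[A] (Fin (n + 1) → A)) V =
            Submodule.map ((consE g' : (Fin (n + 1) → A) →ₗ[A] (Fin (n + 1) → A))) W := by
          rw [hW_def, LinearEquiv.coe_trans, Submodule.map_comp]
        rw [hcomp]
        apply le_antisymm
        · rintro w ⟨x, hxW, rfl⟩
          simp only [LinearEquiv.coe_coe]
          rw [Submodule.mem_pi]
          intro j _
          refine Fin.cases ?_ (fun j' => ?_) j
          · rw [consE_zero, Fin.cons_zero]
            exact hWpi x hxW 0
          · rw [consE_succ, Fin.cons_succ]
            have hx0 : x 0 ∈ Ideal.span {b} := hspanb ▸ hWpi x hxW 0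
            obtain ⟨t, ht⟩ := Ideal.mem_span_singleton'.mp hx0
            have hxs : x - t • (b • (Pi.single 0 1 : Fin (n + 1) → A)) ∈
                W ⊓ LinearMap.ker (LinearMap.proj 0 : (Fin (n + 1) → A) →ₗ[A] A) := by
              refine Submodule.mem_inf.mpr ⟨sub_mem hxW (Submodule.smul_mem _ _ hbW), ?_⟩
              rw [LinearMap.mem_ker]
              simp [LinearMap.proj_apply, Pi.single_eq_same, ht, mul_comm]
            have htl : (fun t' => x t'.succ) ∈ W' := by
              refine ⟨_, hxs, ?_⟩
              funext j''
              simp [LinearMap.funLeft_apply, Pi.single_eq_of_ne (Fin.succ_ne_zero j'')]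
            have hmem : g' (fun t' => x t'.succ) ∈
                Submodule.pi Set.univ (fun i => (m ^ k' i : Ideal A)) :=
              hg' ▸ ⟨_, htl, rfl⟩
            exact Submodule.mem_pi.mp hmem j' (Set.mem_univ _)
        · intro y hy
          rw [Submodule.mem_pi] at hy
          have hy0 : y 0 ∈ Ideal.span {b} := by
            rw [hspanb]
            simpa using hy 0 (Set.mem_univ _)
          obtain ⟨t, ht⟩ := Ideal.mem_span_singleton'.mp hy0
          have hyt : (fun j => y j.succ) ∈
              Submodule.pi Set.univ (fun i => (m ^ k' i : Ideal A)) := by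
            rw [Submodule.mem_pi]
            intro j _
            simpa using hy j.succ (Set.mem_univ _)
          rw [← hg'] at hyt
          obtain ⟨z, hzW', hgz⟩ := hyt
          simp only [LinearEquiv.coe_coe] at hgz
          obtain ⟨x', hx'mem, hx'tl⟩ := hzW'
          obtain ⟨hx'W, hx'k⟩ := Submodule.mem_inf.mp hx'mem
          have hx'0 : x' 0 = 0 := by
            have := LinearMap.mem_ker.mp hx'k
            simpa [LinearMap.proj_apply] using this
          refine ⟨t • (b • (Pi.single 0 1 : Fin (n + 1) → A)) + x',
            add_mem (Submodule.smul_mem _ _ hbW) hx'W, ?_⟩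
          simp only [LinearEquiv.coe_coe]
          funext j
          refine Fin.cases ?_ (fun j' => ?_) j
          · rw [consE_zero]
            simp [hx'0, Pi.single_eq_same, ← ht, mul_comm]
          · rw [consE_succ]
            have hzeq : (fun t' => (t • (b • (Pi.single 0 1 : Fin (n + 1) → A)) + x') t'.succ) = z := by
              funext j''
              rw [← hx'tl]
              simp [LinearMap.funLeft_apply, Pi.single_eq_of_ne (Fin.succ_ne_zero j'')]
            rw [hzeq]
            exact congrFun hgz j'
    · -- V = ⊥ case
      have hV : V = ⊥ := by
        rw [eq_bot_iff]
        intro v hv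
        have hv0 : v = 0 := by
          funext j
          obtain ⟨l, hlr, hsp⟩ := hcls (v j)
          by_cases hb : m ^ l = ⊥
          · simpa [Ideal.span_singleton_eq_bot] using hsp.trans hb
          · exact absurd ⟨l, hb, v, hv, j, hsp⟩ hS
        simp [hv0]
      refine ⟨LinearEquiv.refl A _, fun _ => r, fun _ => le_rfl, ?_⟩
      rw [hV]
      ext x
      simp [Submodule.mem_pi, hm0, funext_iff, Submodule.mem_bot]

end SNFAux

/-- Every submodule `V ≤ O_r^d` is equivalent, via a linear automorphism of `O_r^d`,
to a module of the form `O_r^m × p^{k_1} × ⋯ × p^{k_{n-m}} × 0^{d-n}`; equivalently,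
to `∏ i, p^{k i}` for some monotone `k : Fin d → ℕ` with `k i ≤ r` (here `p^0 = O_r`
and `p^r = 0` in `O_r`). -/
theorem submodule_smith_normal_form
    (O : Type*) [CommRing O] [IsDomain O] [IsDedekindDomain O]
    (p : Ideal O) (hp : p.IsPrime) (hp0 : p ≠ ⊥) (r : ℕ) (hr : 1 ≤ r) (d : ℕ)
    (V : Submodule (O ⧸ p ^ r) (Fin d → O ⧸ p ^ r)) :
    ∃ (g : (Fin d → O ⧸ p ^ r) ≃ₗ[O ⧸ p ^ r] (Fin d → O ⧸ p ^ r)) (k : Fin d → ℕ),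
      Monotone k ∧ (∀ i, k i ≤ r) ∧
      Submodule.map (g : (Fin d → O ⧸ p ^ r) →ₗ[O ⧸ p ^ r] (Fin d → O ⧸ p ^ r)) V =
        Submodule.pi Set.univ
          (fun i => (Ideal.map (Ideal.Quotient.mk (p ^ r)) (p ^ k i) :
            Submodule (O ⧸ p ^ r) (O ⧸ p ^ r))) := by
  classical
  set mk := Ideal.Quotient.mk (p ^ r) with hmk
  set m : Ideal (O ⧸ p ^ r) := Ideal.map mk p with hm
  have hm0 : m ^ r = ⊥ := by
    rw [hm, ← Ideal.map_pow, hmk, Ideal.map_quotient_self]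
  have hprime : Prime p := Ideal.prime_of_isPrime hp0 hp
  have hsurj : Function.Surjective mk := Ideal.Quotient.mk_surjective
  have hcls : ∀ x : O ⧸ p ^ r, ∃ k, k ≤ r ∧ Ideal.span {x} = m ^ k := by
    intro x
    have hmapc := Ideal.map_comap_of_surjective mk hsurj (Ideal.span {x})
    have hle : p ^ r ≤ Ideal.comap mk (Ideal.span {x}) := by
      intro a ha
      rw [Ideal.mem_comap, show mk a = 0 from Ideal.Quotient.eq_zero_iff_mem.mpr ha]
      exact zero_mem _
    obtain ⟨k, hk, hass⟩ := (dvd_prime_pow hprime r).mp (Ideal.dvd_iff_le.mpr hle)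
    exact ⟨k, hk, by rw [← hmapc, associated_iff_eq.mp hass, Ideal.map_pow]⟩
  have hmne : m ≠ ⊤ := by
    intro h
    have hcm : Ideal.comap mk m = ⊤ := by rw [h, Ideal.comap_top]
    rw [hm, Ideal.comap_map_of_surjective mk hsurj, ← RingHom.ker_eq_comap_bot,
      hmk, Ideal.mk_ker, sup_eq_left.mpr (Ideal.pow_le_self (by omega))] at hcm
    exact hp.ne_top hcm
  obtain ⟨π, hπ⟩ : ∃ π : O ⧸ p ^ r, Ideal.span {π} = m := by
    by_cases h2 : m ≤ m ^ 2
    · have hstab : m ^ 1 = m ^ (1 + 1) := by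
        rw [pow_one]
        exact le_antisymm h2 (Ideal.pow_le_self two_ne_zero)
      have hbot : m = ⊥ := by
        have := SNFAux.pow_stab_bot hm0 hstab
        rwa [pow_one] at this
      exact ⟨0, by rw [hbot]; simp⟩
    · obtain ⟨x, hxm, hx2⟩ := SetLike.not_le_iff_exists.mp h2
      obtain ⟨k, hkr, hsp⟩ := hcls x
      have hk1 : k = 1 := by
        rcases k with _ | _ | k
        · exfalso
          rw [pow_zero, Ideal.one_eq_top] at hsp
          have : (⊤ : Ideal (O ⧸ p ^ r)) ≤ m :=
            hsp ▸ (Ideal.span_singleton_le_iff_mem _).mpr hxm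
          exact hmne (top_le_iff.mp this)
        · rfl
        · exfalso
          exact hx2 (Ideal.pow_le_pow_right (by omega)
            (hsp ▸ Ideal.mem_span_singleton_self x))
      exact ⟨x, by rw [hsp, hk1, pow_one]⟩
  obtain ⟨g, k, hkr, hmap⟩ := SNFAux.key hπ hm0 hcls d V
  set σ := Tuple.sort k with hσ
  refine ⟨g ≪≫ₗ LinearEquiv.funCongrLeft _ _ σ, k ∘ σ, Tuple.monotone_sort k,
    fun i => hkr _, ?_⟩
  have hcomp : Submodule.map ((g ≪≫ₗ LinearEquiv.funCongrLeft _ _ σ) :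
      (Fin d → O ⧸ p ^ r) →ₗ[O ⧸ p ^ r] (Fin d → O ⧸ p ^ r)) V =
      Submodule.map ((LinearEquiv.funCongrLeft (O ⧸ p ^ r) (O ⧸ p ^ r) σ :
        (Fin d → O ⧸ p ^ r) →ₗ[O ⧸ p ^ r] (Fin d → O ⧸ p ^ r)))
        (Submodule.map (g : (Fin d → O ⧸ p ^ r) →ₗ[O ⧸ p ^ r] (Fin d → O ⧸ p ^ r)) V) := by
    rw [LinearEquiv.coe_trans, Submodule.map_comp]
  rw [hcomp, hmap, SNFAux.map_funCongrLeft_pi]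
  simp only [Ideal.map_pow]
  rfl
end

section
/- If a submodule V ≤ O_r^d is generated by n elements, then every submodule W ≤ V is also generated by n elements. -/
open Submodule Set

/-- Over a principal ideal ring, a submodule of a cyclic module is cyclic. -/
theorem aux_cyclic {R : Type*} [CommRing R] [IsPrincipalIdealRing R]
    {M : Type*} [AddCommGroup M] [Module R M] (x : M) (W : Submodule R M)
    (hW : W ≤ Submodule.span R {x}) : ∃ y : M, W = Submodule.span R {y} := by
  set φ : R →ₗ[R] M := LinearMap.toSpanSingleton R M x with hφ
  have hrange : LinearMap.range φ = Submodule.span R {x} :=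
    (LinearMap.span_singleton_eq_range R M x).symm
  obtain ⟨a, ha⟩ := (IsPrincipalIdealRing.principal (W.comap φ)).principal
  refine ⟨φ a, ?_⟩
  have : Submodule.map φ (W.comap φ) = W := by
    rw [Submodule.map_comap_eq, hrange, inf_eq_right.mpr hW]
  rw [← this, ha]
  rw [Submodule.map_span, Set.image_singleton]

/-- Over a principal ideal ring, a submodule of a module generated by `n` elements is
generated by `n` elements. -/
theorem aux_bound {R : Type*} [CommRing R] [IsPrincipalIdealRing R]
    {M : Type*} [AddCommGroup M] [Module R M] :
    ∀ n : ℕ, ∀ g : Fin n → M, ∀ W : Submodule R M,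
      W ≤ Submodule.span R (Set.range g) →
      ∃ t : Fin n → M, Submodule.span R (Set.range t) = W := by
  intro n
  induction n with
  | zero =>
      intro g W hW
      refine ⟨Fin.elim0, ?_⟩
      rw [Set.range_eq_empty, Submodule.span_empty]
      symm
      rw [eq_bot_iff]
      refine le_trans hW ?_
      rw [Set.range_eq_empty, Submodule.span_empty]
  | succ n ih =>
      intro g W hW
      set N : Submodule R M := Submodule.span R (Set.range (g ∘ Fin.castSucc)) with hN
      set q := N.mkQ with hq
      -- image of W in M ⧸ N is contained in span of q (g (Fin.last n))
      have himg : Submodule.map q W ≤ Submodule.span R {q (g (Fin.last n))} := by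
        refine le_trans (Submodule.map_mono hW) ?_
        rw [Submodule.map_span]
        refine Submodule.span_le.mpr ?_
        rintro _ ⟨_, ⟨i, rfl⟩, rfl⟩
        induction i using Fin.lastCases with
        | last => exact Submodule.subset_span rfl
        | cast j =>
            have : g (Fin.castSucc j) ∈ N := Submodule.subset_span ⟨j, rfl⟩
            have hz : q (g (Fin.castSucc j)) = 0 := by
              rwa [hq, Submodule.mkQ_apply, Submodule.Quotient.mk_eq_zero]
            rw [hz]
            exact Submodule.zero_mem _
      obtain ⟨y, hy⟩ := aux_cyclic (q (g (Fin.last n))) (Submodule.map q W) himg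
      -- obtain a preimage of y in W
      have hy_mem : y ∈ Submodule.map q W := by
        rw [hy]; exact Submodule.subset_span rfl
      obtain ⟨w, hwW, hwy⟩ := hy_mem
      -- apply induction hypothesis to W ⊓ N
      obtain ⟨t', ht'⟩ := ih (g ∘ Fin.castSucc) (W ⊓ N) inf_le_right
      refine ⟨Fin.cons w t', ?_⟩
      rw [Fin.range_cons]
      apply le_antisymm
      · rw [Submodule.span_le]
        rintro v (rfl | hv)
        · exact hwW
        · have : v ∈ Submodule.span R (Set.range t') := Submodule.subset_span hv
          rw [ht'] at this
          exact this.1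
      · intro u hu
        have hqu : q u ∈ Submodule.map q W := ⟨u, hu, rfl⟩
        rw [hy] at hqu
        obtain ⟨c, hc⟩ := Submodule.mem_span_singleton.mp hqu
        have hdiff : u - c • w ∈ N := by
          have : q (u - c • w) = 0 := by
            rw [map_sub, map_smul, hwy, hc, sub_self]
          rwa [hq, Submodule.mkQ_apply, Submodule.Quotient.mk_eq_zero] at this
        have hdiffW : u - c • w ∈ W ⊓ N := ⟨W.sub_mem hu (W.smul_mem c hwW), hdiff⟩
        rw [← ht'] at hdiffW
        have h1 : u - c • w ∈ Submodule.span R (insert w (Set.range t')) :=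
          Submodule.span_mono (Set.subset_insert _ _) hdiffW
        have h2 : c • w ∈ Submodule.span R (insert w (Set.range t')) :=
          Submodule.smul_mem _ c (Submodule.subset_span (Set.mem_insert _ _))
        have := Submodule.add_mem _ h1 h2
        rwa [sub_add_cancel] at this

/-- The quotient of a Dedekind domain by a power of a nonzero prime is a principal
ideal ring. -/
theorem aux_pir (O : Type*) [CommRing O] [IsDomain O] [IsDedekindDomain O]
    (p : Ideal O) (hp : p.IsPrime) (hp0 : p ≠ ⊥) (r : ℕ) :
    IsPrincipalIdealRing (O ⧸ p ^ r) := by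
  haveI : p.IsPrime := hp
  haveI : IsDiscreteValuationRing (Localization.AtPrime p) :=
    IsLocalization.AtPrime.isDiscreteValuationRing_of_dedekind_domain O hp0 _
  -- the quotient map O → O ⧸ p^r sends p.primeCompl to units
  have hunit : ∀ s : p.primeCompl, IsUnit (Ideal.Quotient.mk (p ^ r) (s : O)) := by
    rintro ⟨s, hs⟩
    have hmax : p.IsMaximal := Ideal.IsPrime.isMaximal hp hp0
    have hcop : IsCoprime (Ideal.span {s}) p := by
      rw [Ideal.isCoprime_iff_sup_eq]
      obtain ⟨a, b, hb, hab⟩ := hmax.exists_inv hs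
      rw [Ideal.eq_top_iff_one, ← hab]
      exact Submodule.add_mem _
        (Submodule.mem_sup_left (Ideal.mul_mem_left _ a (Ideal.mem_span_singleton_self s)))
        (Submodule.mem_sup_right hb)
    have hcop' : IsCoprime (Ideal.span {s}) (p ^ r) := hcop.pow_right
    rw [Ideal.isCoprime_iff_sup_eq] at hcop'
    have h1 : (1 : O) ∈ Ideal.span {s} ⊔ p ^ r := hcop' ▸ Submodule.mem_top
    obtain ⟨a, ha, b, hb, hab⟩ := Submodule.mem_sup.mp h1
    obtain ⟨c, rfl⟩ := Ideal.mem_span_singleton'.mp ha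
    refine IsUnit.of_mul_eq_one (Ideal.Quotient.mk (p ^ r) c) ?_
    have : Ideal.Quotient.mk (p ^ r) b = 0 := Ideal.Quotient.eq_zero_iff_mem.mpr hb
    calc Ideal.Quotient.mk (p ^ r) s * Ideal.Quotient.mk (p ^ r) c
        = Ideal.Quotient.mk (p ^ r) (c * s + b) := by rw [map_add, map_mul, this, add_zero,
          mul_comm]
      _ = 1 := by rw [hab, map_one]
  -- lift to a surjective map from the localization
  let f : Localization.AtPrime p →+* O ⧸ p ^ r :=
    IsLocalization.lift (M := p.primeCompl) (g := Ideal.Quotient.mk (p ^ r)) hunit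
  have hsurj : Function.Surjective f := by
    intro x
    obtain ⟨y, rfl⟩ := Ideal.Quotient.mk_surjective x
    exact ⟨algebraMap O (Localization.AtPrime p) y,
      IsLocalization.lift_eq hunit y⟩
  exact IsPrincipalIdealRing.of_surjective f hsurj

/-- If a submodule `V ≤ O_r^d` is generated by `n` elements, then every submodule
`W ≤ V` is also generated by `n` elements. -/
theorem submodule_of_fg_is_fg
    (O : Type*) [CommRing O] [IsDomain O] [IsDedekindDomain O]
    (p : Ideal O) (hp : p.IsPrime) (hp0 : p ≠ ⊥) (r : ℕ) (hr : 1 ≤ r) (d n : ℕ)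
    (V W : Submodule (O ⧸ p ^ r) (Fin d → O ⧸ p ^ r))
    (hV : ∃ s : Fin n → (Fin d → O ⧸ p ^ r), Submodule.span (O ⧸ p ^ r) (Set.range s) = V)
    (hWV : W ≤ V) :
    ∃ t : Fin n → (Fin d → O ⧸ p ^ r), Submodule.span (O ⧸ p ^ r) (Set.range t) = W := by
  haveI : IsPrincipalIdealRing (O ⧸ p ^ r) := aux_pir O p hp hp0 r
  obtain ⟨s, hs⟩ := hV
  exact aux_bound n s W (hs ▸ hWV)
end

section
/- The number of free rank-n submodules of O_r^d equals S_n^d := (d choose n)_q · q^{(r-1)n(d-n)}, where (d choose n)_q is the Gaussian binomial coefficient. -/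
/-- The Gaussian (q-)binomial coefficient `(n choose k)_q`, defined via the
q-Pascal recursion `(n+1 choose k+1)_q = (n choose k)_q + q^{k+1} (n choose k+1)_q`. -/
def gaussBinomial (q : ℕ) : ℕ → ℕ → ℕ
  | _, 0 => 1
  | 0, _ + 1 => 0
  | n + 1, k + 1 => gaussBinomial q n k + q ^ (k + 1) * gaussBinomial q n (k + 1)

open Finset

lemma gaussBinomial_eq_zero (q : ℕ) : ∀ {d n}, d < n → gaussBinomial q d n = 0 := by
  intro d
  induction d with
  | zero => intro n hn; match n, hn with
    | n+1, _ => rfl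
  | succ e ih =>
    intro n hn
    match n, hn with
    | k+1, hn =>
      show gaussBinomial q e k + q ^ (k+1) * gaussBinomial q e (k+1) = 0
      rw [ih (by omega), ih (by omega)]; simp

lemma prod_pow_sub_step (q m t : ℕ) :
    ∏ i ∈ range (t+1), (q^(m+1) - q^i) =
      (q^(m+1) - 1) * q^t * ∏ i ∈ range t, (q^m - q^i) := by
  rw [Finset.prod_range_succ']
  have h1 : ∀ i, q^(m+1) - q^(i+1) = q * (q^m - q^i) := by
    intro i
    rw [Nat.mul_sub, pow_succ, pow_succ]
    ring_nf
  simp only [h1, pow_zero]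
  rw [Finset.prod_mul_distrib, Finset.prod_const, Finset.card_range]
  ring

lemma gaussBinomial_mul_prod (q : ℕ) (hq : 1 ≤ q) :
    ∀ d n, gaussBinomial q d n * ∏ i ∈ range n, (q^n - q^i) = ∏ i ∈ range n, (q^d - q^i) := by
  intro d
  induction d with
  | zero =>
    intro n
    match n with
    | 0 => simp [gaussBinomial]
    | k+1 =>
      rw [gaussBinomial_eq_zero q (by omega), zero_mul]
      exact (Finset.prod_eq_zero (Finset.mem_range.2 (Nat.succ_pos k)) (by simp)).symm
  | succ d ih =>
    intro n
    match n with
    | 0 => simp [gaussBinomial]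
    | k+1 =>
      by_cases hdk : d < k
      · rw [gaussBinomial_eq_zero q (by omega), zero_mul]
        exact (Finset.prod_eq_zero (Finset.mem_range.2 (by omega : d+1 < k+1))
          (by simp)).symm
      · push_neg at hdk
        show (gaussBinomial q d k + q ^ (k+1) * gaussBinomial q d (k+1)) * _ = _
        have ih1 := ih k
        have ih2 := ih (k+1)
        have e1 : q^(k+1) * (q^d - q^k) = q^k * (q^(d+1) - q^(k+1)) := by
          rw [Nat.mul_sub, Nat.mul_sub]; congr 1 <;> ring
        have e2 : q^(k+1) ≤ q^(d+1) := Nat.pow_le_pow_right hq (by omega)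
        have e3 : 1 ≤ q^(k+1) := Nat.one_le_pow _ _ (by omega)
        calc (gaussBinomial q d k + q ^ (k+1) * gaussBinomial q d (k+1)) *
                ∏ i ∈ range (k+1), (q^(k+1) - q^i)
            = gaussBinomial q d k * ((q^(k+1) - 1) * q^k * ∏ i ∈ range k, (q^k - q^i))
              + q^(k+1) * (gaussBinomial q d (k+1) * ∏ i ∈ range (k+1), (q^(k+1) - q^i)) := by
              rw [prod_pow_sub_step q k k]; ring
          _ = (q^(k+1) - 1) * q^k * (gaussBinomial q d k * ∏ i ∈ range k, (q^k - q^i))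
              + q^(k+1) * ((∏ i ∈ range k, (q^d - q^i)) * (q^d - q^k)) := by
              rw [ih2, Finset.prod_range_succ]; ring
          _ = (q^(k+1) - 1) * q^k * (∏ i ∈ range k, (q^d - q^i))
              + (q^k * (q^(d+1) - q^(k+1))) * ∏ i ∈ range k, (q^d - q^i) := by
              rw [ih1, ← e1]; ring
          _ = ((q^(k+1) - 1) + (q^(d+1) - q^(k+1))) * q^k * ∏ i ∈ range k, (q^d - q^i) := by
              ring
          _ = (q^(d+1) - 1) * q^k * ∏ i ∈ range k, (q^d - q^i) := by
              congr 2; omega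
          _ = ∏ i ∈ range (k+1), (q^(d+1) - q^i) := (prod_pow_sub_step q d k).symm
section Counting

lemma card_subtype_comp_eq {α β : Type*} [Finite α] [Finite β] (g : α → β) (c : ℕ)
    (hc : ∀ b, Nat.card {a : α // g a = b} = c) (P : β → Prop) :
    Nat.card {a : α // P (g a)} = c * Nat.card {b : β // P b} := by
  have e : {a : α // P (g a)} ≃ Σ b : {b : β // P b}, {a : α // g a = b.1} :=
    { toFun := fun a => ⟨⟨g a.1, a.2⟩, ⟨a.1, rfl⟩⟩
      invFun := fun x => ⟨x.2.1, by rw [x.2.2]; exact x.1.2⟩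
      left_inv := fun a => rfl
      right_inv := fun x => by
        obtain ⟨⟨b, hb⟩, a, ha⟩ := x
        dsimp only at ha
        subst ha
        rfl }
  rw [Nat.card_congr e]
  haveI : Fintype {b : β // P b} := Fintype.ofFinite _
  haveI : ∀ b : {b : β // P b}, Fintype {a : α // g a = b.1} := fun b => Fintype.ofFinite _
  rw [Nat.card_eq_fintype_card, Fintype.card_sigma]
  have hcf : ∀ b : {b : β // P b}, Fintype.card {a : α // g a = b.1} = c := fun b => by
    rw [← Nat.card_eq_fintype_card, hc]
  rw [Finset.sum_congr rfl (fun b _ => hcf b), Finset.sum_const, Finset.card_univ,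
    smul_eq_mul, Nat.card_eq_fintype_card, mul_comm]

lemma card_eq_mul_of_fibers {α β : Type*} [Finite α] [Finite β] (g : α → β) (c : ℕ)
    (hc : ∀ b, Nat.card {a : α // g a = b} = c) :
    Nat.card α = c * Nat.card β := by
  have h := card_subtype_comp_eq g c hc (fun _ => True)
  rwa [Nat.card_congr (Equiv.subtypeUnivEquiv (fun _ => trivial)),
    Nat.card_congr (Equiv.subtypeUnivEquiv (fun _ => trivial))] at h

lemma Submodule.eq_top_of_card_eq {R M : Type*} [Ring R] [AddCommGroup M] [Module R M]
    [Finite M] (N : Submodule R M) (h : Nat.card N = Nat.card M) : N = ⊤ := by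
  have hs : (N : Set M) = Set.univ := by
    apply Set.eq_of_subset_of_ncard_le (Set.subset_univ _)
    · rw [Set.ncard_univ, ← h, ← Nat.card_coe_set_eq]
      exact le_of_eq rfl
  exact SetLike.coe_injective (by rw [hs]; rfl)

end Counting
section Abstract

variable {R kk : Type*} [CommRing R] [Field kk]
variable (φ : R →+* kk) (π : R) (r : ℕ)

lemma linearIndependent_of_red {ℓ n : ℕ}
    (hker : ∀ x : R, φ x = 0 ↔ π ∣ x)
    (hloc : ∀ c : R, φ c ≠ 0 → IsUnit c)
    (hnil : π ^ r = 0)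
    {v : Fin n → (Fin ℓ → R)}
    (hv : LinearIndependent kk (fun j => fun i => φ (v j i))) :
    LinearIndependent R v := by
  rw [Fintype.linearIndependent_iff]
  intro c hc j
  suffices main : ∀ t : ℕ, ∀ j, π ^ t ∣ c j by
    obtain ⟨e, he⟩ := main r j
    rw [he, hnil, zero_mul]
  intro t
  induction t with
  | zero => intro j; simpa using one_dvd _
  | succ t iht =>
    intro j
    choose dd hdd using iht
    by_cases hall : ∀ j', φ (dd j') = 0
    · obtain ⟨e, he⟩ := (hker _).1 (hall j)
      rw [hdd j, he, pow_succ]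
      exact ⟨e, by ring⟩
    · push_neg at hall
      obtain ⟨j₀, hj₀⟩ := hall
      set w := ∑ j', dd j' • v j' with hw
      have hptw : π ^ t • w = 0 := by
        rw [hw, Finset.smul_sum, ← hc]
        exact Finset.sum_congr rfl fun j' _ => by rw [smul_smul, ← hdd j']
      have hred : (fun i => φ (w i)) =
          ∑ j', φ (dd j') • (fun i => φ (v j' i)) := by
        funext i
        simp only [hw, Finset.sum_apply, Pi.smul_apply, smul_eq_mul, map_sum, map_mul]
      have hne : (fun i => φ (w i)) ≠ 0 := by
        rw [hred]
        intro h0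
        exact hj₀ (Fintype.linearIndependent_iff.1 hv _ h0 j₀)
      have hex : ∃ i, φ (w i) ≠ 0 := by
        by_contra hcon
        push_neg at hcon
        exact hne (funext fun i => hcon i)
      obtain ⟨i, hi⟩ := hex
      have hu : IsUnit (w i) := hloc _ hi
      have hzero : π ^ t * w i = 0 := by
        have := congrFun hptw i
        simpa using this
      have hpt0 : π ^ t = 0 := (hu.mul_left_eq_zero).1 hzero
      rw [hdd j, hpt0, zero_mul]
      exact dvd_zero _

lemma red_basis_linearIndependent {ℓ n : ℕ}
    (hker : ∀ x : R, φ x = 0 ↔ π ∣ x)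
    (hloc : ∀ c : R, φ c ≠ 0 → IsUnit c)
    (hsurj : Function.Surjective φ)
    (hr : 1 ≤ r) (hnil : π ^ r = 0) (hpow : π ^ (r-1) ≠ 0)
    {V : Submodule R (Fin ℓ → R)} (b : Module.Basis (Fin n) R V) :
    LinearIndependent kk (fun j => fun i => φ ((b j : Fin ℓ → R) i)) := by
  rw [Fintype.linearIndependent_iff]
  intro g hg j₀
  choose c hc using fun j => hsurj (g j)
  set u : V := ∑ j, c j • b j with hu
  have hcoe : (u : Fin ℓ → R) = ∑ j, c j • (b j : Fin ℓ → R) := by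
    simp [hu]
  have hred0 : ∀ i, φ ((u : Fin ℓ → R) i) = 0 := by
    intro i
    have hgi := congrFun hg i
    rw [hcoe]
    simp only [Finset.sum_apply, Pi.smul_apply, smul_eq_mul, map_sum, map_mul]
    simpa [Finset.sum_apply, Pi.smul_apply, smul_eq_mul, hc] using hgi
  choose x hx using fun i => (hker _).1 (hred0 i)
  have hsm : π ^ (r-1) • u = 0 := by
    have hsc : ((π ^ (r-1) • u : V) : Fin ℓ → R) = 0 := by
      funext i
      have hz : (π ^ (r-1)) * ((u : Fin ℓ → R) i) = 0 := by
        rw [hx i, ← mul_assoc, ← pow_succ, Nat.sub_add_cancel hr, hnil, zero_mul]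
      simpa using hz
    exact (ZeroMemClass.coe_eq_zero).1 hsc
  have hcoeff : π ^ (r-1) * c j₀ = 0 := by
    have hsum : ∑ j, (π ^ (r-1) * c j) • b j = 0 := by
      rw [← hsm, hu, Finset.smul_sum]
      exact Finset.sum_congr rfl fun j _ => by rw [smul_smul]
    exact Fintype.linearIndependent_iff.1 b.linearIndependent _ hsum j₀
  by_contra hg0
  have hunit : IsUnit (c j₀) := hloc _ (by rw [hc j₀]; exact hg0)
  exact hpow ((hunit.mul_left_eq_zero).1 hcoeff)

end Abstract
section Abstract2

variable {R kk : Type*} [CommRing R] [Field kk]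
variable (φ : R →+* kk) (π : R) (r : ℕ)

lemma span_eq_top_of_red [Finite R] {n : ℕ}
    (hker : ∀ x : R, φ x = 0 ↔ π ∣ x)
    (hloc : ∀ c : R, φ c ≠ 0 → IsUnit c)
    (hnil : π ^ r = 0)
    {u : Fin n → Fin n → R}
    (hu : LinearIndependent kk (fun j => fun i => φ (u j i))) :
    Submodule.span R (Set.range u) = ⊤ := by
  have hind : LinearIndependent R u := linearIndependent_of_red φ π r hker hloc hnil hu
  apply Submodule.eq_top_of_card_eq
  rw [Nat.card_congr (Module.Basis.span hind).equivFun.toEquiv]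

end Abstract2
section AbstractMain

open Finset

variable {R kk : Type*} [CommRing R] [Field kk]

theorem abstract_count (φ : R →+* kk) (π : R) (r : ℕ)
    [Finite R] [Finite kk] [Nontrivial R] (q : ℕ)
    (hker : ∀ x : R, φ x = 0 ↔ π ∣ x)
    (hloc : ∀ c : R, φ c ≠ 0 → IsUnit c)
    (hsurj : Function.Surjective φ)
    (hr : 1 ≤ r) (hnil : π ^ r = 0) (hpow : π ^ (r - 1) ≠ 0)
    (hq : Nat.card kk = q) (hcardR : Nat.card R = q ^ r)
    (d n : ℕ) (hn : n ≤ d) :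
    Nat.card {V : Submodule R (Fin d → R) // Module.Free R ↥V ∧ Module.finrank R ↥V = n} =
      gaussBinomial q d n * q ^ ((r - 1) * n * (d - n)) := by
  classical
  haveI := Fintype.ofFinite kk
  have hqf : Fintype.card kk = q := by rw [← Nat.card_eq_fintype_card, hq]
  have hq2 : 2 ≤ q := by
    have h1 : 1 < Fintype.card kk := Fintype.one_lt_card
    omega
  have hq0 : 0 < q := by omega
  have hq1 : 1 < q := by omega
  haveI := commRing_strongRankCondition R
  -- fibers of φ all have cardinality q^(r-1)
  have hfib0 : ∀ z : kk, Nat.card {x : R // φ x = z} = Nat.card {x : R // φ x = 0} := by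
    intro z
    obtain ⟨x₀, hx₀⟩ := hsurj z
    refine (Nat.card_congr (Equiv.ofBijective
      (fun t : {x : R // φ x = 0} =>
        (⟨t.1 + x₀, by rw [map_add, t.2, hx₀, zero_add]⟩ : {x : R // φ x = z})) ?_)).symm
    constructor
    · intro a b hab
      apply Subtype.ext
      have h := congrArg Subtype.val hab
      simpa using h
    · intro s
      refine ⟨⟨s.1 - x₀, by rw [map_sub, s.2, hx₀, sub_self]⟩, Subtype.ext (by simp)⟩
  have hc0 : Nat.card {x : R // φ x = 0} = q ^ (r - 1) := by
    have h1 : Nat.card R = Nat.card {x : R // φ x = 0} * Nat.card kk :=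
      card_eq_mul_of_fibers φ _ (fun z => hfib0 z)
    rw [hcardR, hq] at h1
    have h2 : q ^ r = q ^ (r - 1) * q := by rw [← pow_succ, Nat.sub_add_cancel hr]
    rw [h2] at h1
    exact (Nat.eq_of_mul_eq_mul_right hq0 h1).symm
  have hfib : ∀ z : kk, Nat.card {x : R // φ x = z} = q ^ (r - 1) :=
    fun z => (hfib0 z).trans hc0
  -- the count of tuples with linearly independent reduction
  have cardA : ∀ ℓ : ℕ, n ≤ ℓ →
      Nat.card {v : Fin n → Fin ℓ → R //
          LinearIndependent kk (fun j => fun i => φ (v j i))}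
        = (q ^ (r - 1)) ^ (n * ℓ) * ∏ i ∈ range n, (q ^ ℓ - q ^ i) := by
    intro ℓ hℓ
    have hfibg : ∀ w : Fin n → Fin ℓ → kk,
        Nat.card {v : Fin n → Fin ℓ → R // (fun j => fun i => φ (v j i)) = w}
          = (q ^ (r - 1)) ^ (n * ℓ) := by
      intro w
      have e1 : {v : Fin n → Fin ℓ → R // (fun j => fun i => φ (v j i)) = w}
          ≃ ∀ j : Fin n, {y : Fin ℓ → R // ∀ i, φ (y i) = w j i} :=
        (Equiv.subtypeEquivRight (fun v => by simp [funext_iff])).trans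
          Equiv.subtypePiEquivPi
      have e2 : ∀ j : Fin n, {y : Fin ℓ → R // ∀ i, φ (y i) = w j i}
          ≃ ∀ i : Fin ℓ, {x : R // φ x = w j i} := fun j => Equiv.subtypePiEquivPi (p := fun i (x : R) => φ x = w j i)
      rw [Nat.card_congr (e1.trans (Equiv.piCongrRight e2))]
      simp only [Nat.card_pi, hfib]
      rw [Finset.prod_const, Finset.prod_const, Finset.card_univ, Finset.card_univ,
        Fintype.card_fin, Fintype.card_fin, ← pow_mul, Nat.mul_comm ℓ n]
    have hP := card_subtype_comp_eq
      (fun (v : Fin n → Fin ℓ → R) => (fun j => fun i => φ (v j i)))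
      ((q ^ (r - 1)) ^ (n * ℓ)) hfibg (fun w => LinearIndependent kk w)
    rw [hP]
    congr 1
    have hfr : Module.finrank kk (Fin ℓ → kk) = ℓ := Module.finrank_fin_fun kk
    have hcl := card_linearIndependent (K := kk) (V := Fin ℓ → kk) (k := n)
      (by rw [hfr]; exact hℓ)
    rw [hcl, hqf, hfr]
    exact Fin.prod_univ_eq_prod_range (fun i => q ^ ℓ - q ^ i) n
  -- the classifying map to submodules
  haveI : Finite (Submodule R (Fin d → R)) :=
    Finite.of_injective (fun N => (N : Set (Fin d → R))) SetLike.coe_injective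
  have hFdata : ∀ v : {v : Fin n → Fin d → R //
      LinearIndependent kk (fun j => fun i => φ (v j i))},
      Module.Free R ↥(Submodule.span R (Set.range v.1)) ∧
        Module.finrank R ↥(Submodule.span R (Set.range v.1)) = n := by
    intro v
    have hind : LinearIndependent R v.1 := linearIndependent_of_red φ π r hker hloc hnil v.2
    refine ⟨Module.Free.of_basis (Module.Basis.span hind), ?_⟩
    rw [Module.finrank_eq_card_basis (Module.Basis.span hind), Fintype.card_fin]
  set St := {V : Submodule R (Fin d → R) // Module.Free R ↥V ∧ Module.finrank R ↥V = n}
    with hSt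
  set Ad := {v : Fin n → Fin d → R // LinearIndependent kk (fun j => fun i => φ (v j i))}
    with hAd
  set F : Ad → St := fun v => ⟨Submodule.span R (Set.range v.1), hFdata v⟩ with hF
  have hfibF : ∀ V : St, Nat.card {va : Ad // F va = V} =
      Nat.card {u : Fin n → Fin n → R //
        LinearIndependent kk (fun j => fun i => φ (u j i))} := by
    intro V
    haveI : Module.Finite R ↥V.1 := Module.Finite.of_finite
    haveI : Module.Free R ↥V.1 := V.2.1
    let b : Module.Basis (Fin n) R ↥V.1 := Module.finBasisOfFinrankEq R ↥V.1 V.2.2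
    let L : (Fin n → R) →ₗ[R] (Fin d → R) := V.1.subtype ∘ₗ b.equivFun.symm.toLinearMap
    have hL : ∀ x : Fin n → R, L x = ((b.equivFun.symm x : ↥V.1) : Fin d → R) :=
      fun _ => rfl
    have hLsum : ∀ x : Fin n → R, L x = ∑ i, x i • ((b i : ↥V.1) : Fin d → R) := by
      intro x
      rw [hL, Module.Basis.equivFun_symm_apply]
      simp
    have hw : LinearIndependent kk (fun i => fun t => φ (((b i : ↥V.1) : Fin d → R) t)) :=
      red_basis_linearIndependent φ π r hker hloc hsurj hr hnil hpow b
    let T : (Fin n → kk) →ₗ[kk] (Fin d → kk) :=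
      Fintype.linearCombination kk (fun i => fun t => φ (((b i : ↥V.1) : Fin d → R) t))
    have hTapp : ∀ f : Fin n → kk,
        T f = ∑ i, f i • (fun t => φ (((b i : ↥V.1) : Fin d → R) t)) := by
      intro f
      exact Fintype.linearCombination_apply kk _ f
    have hTker : LinearMap.ker T = ⊥ := by
      rw [LinearMap.ker_eq_bot']
      intro m hm
      rw [hTapp] at hm
      exact funext (Fintype.linearIndependent_iff.1 hw m hm)
    have hLred : ∀ x : Fin n → R, (fun t => φ ((L x) t)) = T (fun i => φ (x i)) := by
      intro x
      funext t
      rw [hLsum, hTapp]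
      simp [Finset.sum_apply, Pi.smul_apply, smul_eq_mul, map_sum, map_mul]
    have hmem : ∀ (x : {va : Ad // F va = V}) (j : Fin n), x.1.1 j ∈ V.1 := by
      intro x j
      have h1 : (F x.1).1 = V.1 := congrArg Subtype.val x.2
      rw [← h1]
      exact Submodule.subset_span (Set.mem_range_self j)
    have hrangeL : LinearMap.range L = V.1 := by
      rw [LinearMap.range_comp, LinearEquiv.range, Submodule.map_top]
      exact Submodule.range_subtype V.1
    have hvu : ∀ (x : {va : Ad // F va = V}) (j : Fin n),
        L (b.equivFun ⟨x.1.1 j, hmem x j⟩) = x.1.1 j := by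
      intro x j
      rw [hL, LinearEquiv.symm_apply_apply]
    have htoFprop : ∀ x : {va : Ad // F va = V},
        LinearIndependent kk
          (fun j => fun i => φ (b.equivFun ⟨x.1.1 j, hmem x j⟩ i)) := by
      intro x
      have hcomp : (⇑T ∘ fun j => fun i => φ (b.equivFun ⟨x.1.1 j, hmem x j⟩ i))
          = fun j => fun i => φ (x.1.1 j i) := by
        funext j
        show T (fun i => φ (b.equivFun ⟨x.1.1 j, hmem x j⟩ i)) = fun i => φ (x.1.1 j i)
        rw [← hLred, hvu x j]
      exact LinearIndependent.of_comp T (by rw [hcomp]; exact x.1.2)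
    have hinvprop : ∀ u : {u : Fin n → Fin n → R //
        LinearIndependent kk (fun j => fun i => φ (u j i))},
        LinearIndependent kk (fun j => fun i => φ ((L (u.1 j)) i)) := by
      intro u
      have hcomp : (fun j => fun i => φ ((L (u.1 j)) i))
          = ⇑T ∘ fun j => fun i => φ (u.1 j i) :=
        funext fun j => hLred (u.1 j)
      rw [hcomp]
      exact u.2.map' T hTker
    have hinvF : ∀ u : {u : Fin n → Fin n → R //
        LinearIndependent kk (fun j => fun i => φ (u j i))},
        F ⟨fun j => L (u.1 j), hinvprop u⟩ = V := by
      intro u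
      apply Subtype.ext
      show Submodule.span R (Set.range fun j => L (u.1 j)) = V.1
      have h1 : (Set.range fun j => L (u.1 j)) = ⇑L '' Set.range u.1 := by
        rw [← Set.range_comp]
        rfl
      rw [h1, Submodule.span_image, span_eq_top_of_red φ π r hker hloc hnil u.2,
        Submodule.map_top, hrangeL]
    refine Nat.card_congr
      ⟨fun x => ⟨fun j => b.equivFun ⟨x.1.1 j, hmem x j⟩, htoFprop x⟩,
       fun u => ⟨⟨fun j => L (u.1 j), hinvprop u⟩, hinvF u⟩, ?_, ?_⟩
    · intro x
      apply Subtype.ext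
      apply Subtype.ext
      funext j
      exact hvu x j
    · intro u
      apply Subtype.ext
      funext j
      show b.equivFun ⟨L (u.1 j), _⟩ = u.1 j
      have h2 : ∀ (z : Fin n → R) (h : L z ∈ V.1),
          (⟨L z, h⟩ : ↥V.1) = b.equivFun.symm z := fun z h => Subtype.ext (hL z)
      rw [h2, LinearEquiv.apply_symm_apply]
  -- the sigma decomposition
  have hsigma : Nat.card Ad = Nat.card St *
      Nat.card {u : Fin n → Fin n → R //
        LinearIndependent kk (fun j => fun i => φ (u j i))} := by
    haveI : Fintype St := Fintype.ofFinite _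
    haveI : ∀ V : St, Fintype {va : Ad // F va = V} := fun V => Fintype.ofFinite _
    rw [← Nat.card_congr (Equiv.sigmaFiberEquiv F)]
    rw [Nat.card_eq_fintype_card (α := (V : St) × {va : Ad // F va = V}), Fintype.card_sigma]
    have hcong : ∀ V : St, Fintype.card {va : Ad // F va = V} =
        Nat.card {u : Fin n → Fin n → R //
          LinearIndependent kk (fun j => fun i => φ (u j i))} := fun V => by
      rw [← Nat.card_eq_fintype_card, hfibF V]
    rw [Finset.sum_congr rfl (fun V _ => hcong V), Finset.sum_const, Finset.card_univ,
      smul_eq_mul, Nat.card_eq_fintype_card (α := St)]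
  have hAdc := cardA d hn
  have hAnc := cardA n le_rfl
  rw [← hAd] at hAdc
  rw [hAdc, hAnc] at hsigma
  have hpos : 0 < (q ^ (r - 1)) ^ (n * n) * ∏ i ∈ range n, (q ^ n - q ^ i) := by
    apply Nat.mul_pos
    · exact pow_pos (pow_pos hq0 _) _
    · apply Finset.prod_pos
      intro i hi
      rw [Finset.mem_range] at hi
      exact Nat.sub_pos_of_lt (Nat.pow_lt_pow_right hq1 hi)
  have hexp : (r - 1) * n * (d - n) + (r - 1) * (n * n) = (r - 1) * (n * d) := by
    have h1 : n * (d - n) + n * n = n * d := by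
      rw [Nat.mul_sub]
      exact Nat.sub_add_cancel (Nat.mul_le_mul_left n hn)
    calc (r - 1) * n * (d - n) + (r - 1) * (n * n)
        = (r - 1) * (n * (d - n) + n * n) := by ring
      _ = (r - 1) * (n * d) := by rw [h1]
  have hkey : (gaussBinomial q d n * q ^ ((r - 1) * n * (d - n))) *
      ((q ^ (r - 1)) ^ (n * n) * ∏ i ∈ range n, (q ^ n - q ^ i))
      = (q ^ (r - 1)) ^ (n * d) * ∏ i ∈ range n, (q ^ d - q ^ i) := by
    have hg := gaussBinomial_mul_prod q hq0 d n
    calc (gaussBinomial q d n * q ^ ((r - 1) * n * (d - n))) *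
          ((q ^ (r - 1)) ^ (n * n) * ∏ i ∈ range n, (q ^ n - q ^ i))
        = (gaussBinomial q d n * ∏ i ∈ range n, (q ^ n - q ^ i)) *
          (q ^ ((r - 1) * n * (d - n)) * (q ^ (r - 1)) ^ (n * n)) := by ring
      _ = (∏ i ∈ range n, (q ^ d - q ^ i)) * (q ^ (r - 1)) ^ (n * d) := by
          rw [hg, ← pow_mul, ← pow_mul, ← pow_add, hexp]
      _ = (q ^ (r - 1)) ^ (n * d) * ∏ i ∈ range n, (q ^ d - q ^ i) := by ring
  exact Nat.eq_of_mul_eq_mul_right hpos (hsigma.symm.trans hkey.symm)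

end AbstractMain
/-- The number of free rank-`n` submodules of `O_r^d` is
`(d choose n)_q · q^{(r-1)n(d-n)}`. -/
theorem card_free_rank_n_submodules
    (O : Type*) [CommRing O] [IsDomain O] [IsDedekindDomain O]
    (p : Ideal O) (hp : p.IsPrime) (hp0 : p ≠ ⊥) (r : ℕ) (hr : 1 ≤ r) (d n : ℕ)
    (hn : n ≤ d) [Finite (O ⧸ p)] (q : ℕ) (hq : Nat.card (O ⧸ p) = q) :
    Nat.card {V : Submodule (O ⧸ p ^ r) (Fin d → O ⧸ p ^ r) //
        Module.Free (O ⧸ p ^ r) V ∧ Module.finrank (O ⧸ p ^ r) V = n} =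
      gaussBinomial q d n * q ^ ((r - 1) * n * (d - n)) := by
  classical
  have hr0 : r ≠ 0 := by omega
  haveI hpmax : p.IsMaximal := hp.isMaximal hp0
  letI : Field (O ⧸ p) := Ideal.Quotient.field p
  have hple : p ^ r ≤ p := Ideal.pow_le_self hr0
  set φ : (O ⧸ p ^ r) →+* (O ⧸ p) := Ideal.Quotient.factor hple with hφ
  have hsurj : Function.Surjective φ := by
    intro y
    obtain ⟨x, rfl⟩ := Ideal.Quotient.mk_surjective y
    exact ⟨Ideal.Quotient.mk (p ^ r) x, Ideal.Quotient.factor_mk hple x⟩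
  -- cardinality of R
  have hcardR : Nat.card (O ⧸ p ^ r) = q ^ r := by
    have h1 := cardQuot_pow_of_prime (P := p) hp0 (i := r)
    rw [Submodule.cardQuot_apply, Submodule.cardQuot_apply] at h1
    rw [h1, hq]
  have hq2 : 2 ≤ q := by
    haveI := Fintype.ofFinite (O ⧸ p)
    have h2 : 1 < Fintype.card (O ⧸ p) := Fintype.one_lt_card
    rw [Nat.card_eq_fintype_card] at hq
    omega
  haveI : Finite (O ⧸ p ^ r) := Nat.finite_of_card_ne_zero
    (by rw [hcardR]; positivity)
  haveI : Nontrivial (O ⧸ p ^ r) := Ideal.Quotient.nontrivial_iff.mpr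
    (fun h => hpmax.ne_top (top_le_iff.mp (h ▸ hple)))
  -- choose a uniformizer
  have hlt : p ^ 2 < p := by
    have h21 := Ideal.pow_succ_lt_pow hp0 1
    rwa [pow_one] at h21
  obtain ⟨a, hap, hap2⟩ := SetLike.exists_of_lt hlt
  set π : O ⧸ p ^ r := Ideal.Quotient.mk (p ^ r) a with hπdef
  -- p = span a ⊔ p^j for all j ≥ 1
  have hpow2 : (p ^ 2 : Ideal O) = p ^ (1 + 1) := by norm_num
  have base2 : Ideal.span {a} ⊔ p ^ 2 = p := by
    have hlt1 : p ^ (1 + 1) < Ideal.span {a} ⊔ p ^ (1 + 1) := by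
      refine lt_of_le_of_ne le_sup_right (fun h => hap2 ?_)
      have hmem : a ∈ Ideal.span {a} ⊔ p ^ (1 + 1) :=
        Ideal.mem_sup_left (Ideal.mem_span_singleton.mpr dvd_rfl)
      rw [← h] at hmem
      rwa [hpow2]
    have hle1 : Ideal.span {a} ⊔ p ^ (1 + 1) ≤ p ^ 1 := by
      rw [pow_one]
      exact sup_le (Ideal.span_le.mpr (Set.singleton_subset_iff.mpr hap))
        (Ideal.pow_le_self (by omega))
    have h := Ideal.eq_prime_pow_of_succ_lt_of_le hp0 hlt1 hle1
    rw [pow_one] at h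
    rw [hpow2]
    exact h
  have hsup : ∀ j, 1 ≤ j → p ≤ Ideal.span {a} ⊔ p ^ j := by
    intro j hj
    induction j, hj using Nat.le_induction with
    | base => rw [pow_one]; exact le_sup_right
    | succ j hj ih =>
      have h2 : p ^ 2 ≤ Ideal.span {a} ⊔ p ^ (j + 1) := by
        calc p ^ 2 = p * p := sq p
          _ ≤ p * (Ideal.span {a} ⊔ p ^ j) := Ideal.mul_mono_right ih
          _ = p * Ideal.span {a} ⊔ p * p ^ j := Ideal.mul_sup p _ _
          _ ≤ Ideal.span {a} ⊔ p ^ (j + 1) := by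
              apply sup_le_sup Ideal.mul_le_right
              rw [← pow_succ']
      calc p = Ideal.span {a} ⊔ p ^ 2 := base2.symm
        _ ≤ Ideal.span {a} ⊔ (Ideal.span {a} ⊔ p ^ (j + 1)) := sup_le_sup_left h2 _
        _ = Ideal.span {a} ⊔ p ^ (j + 1) := by rw [← sup_assoc, sup_idem]
  -- the maximal ideal is generated by π
  have hm_span : Ideal.map (Ideal.Quotient.mk (p ^ r)) p = Ideal.span {π} := by
    apply le_antisymm
    · calc Ideal.map (Ideal.Quotient.mk (p ^ r)) p
          ≤ Ideal.map (Ideal.Quotient.mk (p ^ r)) (Ideal.span {a} ⊔ p ^ r) :=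
            Ideal.map_mono (hsup r hr)
        _ = Ideal.span {π} := by
            rw [Ideal.map_sup, Ideal.map_quotient_self, sup_bot_eq, Ideal.map_span,
              Set.image_singleton]
    · rw [Ideal.span_le, Set.singleton_subset_iff]
      exact Ideal.mem_map_of_mem _ hap
  -- kernel of φ
  have hker : ∀ x : O ⧸ p ^ r, φ x = 0 ↔ π ∣ x := by
    intro x
    obtain ⟨y, rfl⟩ := Ideal.Quotient.mk_surjective x
    rw [hφ, Ideal.Quotient.factor_mk, Ideal.Quotient.eq_zero_iff_mem,
      ← Ideal.mem_span_singleton, ← hm_span, Ideal.mem_quotient_iff_mem hple]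
  have hnil : π ^ r = 0 := by
    rw [hπdef, ← map_pow, Ideal.Quotient.eq_zero_iff_mem]
    exact Ideal.pow_mem_pow hap r
  have hpow : π ^ (r - 1) ≠ 0 := by
    intro h0
    have hb : Ideal.map (Ideal.Quotient.mk (p ^ r)) (p ^ (r - 1)) = ⊥ := by
      rw [Ideal.map_pow, hm_span, Ideal.span_singleton_pow, h0, Ideal.span_singleton_eq_bot.mpr rfl]
    rw [Ideal.map_eq_bot_iff_le_ker, Ideal.mk_ker] at hb
    have hlt2 := Ideal.pow_succ_lt_pow hp0 (r - 1)
    rw [Nat.sub_add_cancel hr] at hlt2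
    exact absurd hb (not_le_of_gt hlt2)
  -- locality
  have hmax : (Ideal.map (Ideal.Quotient.mk (p ^ r)) p).IsMaximal := by
    rw [Ideal.Quotient.maximal_ideal_iff_isField_quotient]
    have e : ((O ⧸ p ^ r) ⧸ Ideal.map (Ideal.Quotient.mk (p ^ r)) p) ≃+* (O ⧸ p) :=
      (DoubleQuot.quotQuotEquivQuotSup (p ^ r) p).trans
        (Ideal.quotEquivOfEq (sup_eq_right.mpr hple))
    exact MulEquiv.isField (Field.toIsField (O ⧸ p)) e.toMulEquiv
  have hloc : ∀ c : O ⧸ p ^ r, φ c ≠ 0 → IsUnit c := by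
    intro c hc
    have hcm : c ∉ Ideal.map (Ideal.Quotient.mk (p ^ r)) p := by
      intro hmem
      apply hc
      rw [hker]
      rw [hm_span] at hmem
      exact Ideal.mem_span_singleton.mp hmem
    obtain ⟨y, i, hi, hyi⟩ := hmax.exists_inv hcm
    have hir : i ^ r = 0 := by
      have h1 : i ^ r ∈ (Ideal.map (Ideal.Quotient.mk (p ^ r)) p) ^ r :=
        Ideal.pow_mem_pow hi r
      rw [← Ideal.map_pow, Ideal.map_quotient_self] at h1
      exact (Submodule.mem_bot _).mp h1
    have hu : IsUnit (1 - i) := IsNilpotent.isUnit_one_sub ⟨r, hir⟩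
    have hyc : y * c = 1 - i := by
      rw [← hyi]; ring
    exact isUnit_of_mul_isUnit_right (hyc ▸ hu)
  exact abstract_count φ π r q hker hloc hsurj hr hnil hpow hq hcardR d n hn
end

section
/- GL_d(O_r) acts transitively on the set of free rank-n submodules of O_r^d, and the stabilizer of the standard submodule spanned by e_1,...,e_n has index (d choose n)_q · q^{(r-1)n(d-n)}. -/
open Matrix Finset Function

/-- `Q q m = ∏_{j=1}^m (q^j - 1)`. -/
def qPoch (q m : ℕ) : ℕ := ∏ j ∈ Finset.range m, (q ^ (j + 1) - 1)

lemma qPoch_zero (q : ℕ) : qPoch q 0 = 1 := rfl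

lemma qPoch_succ (q m : ℕ) : qPoch q (m + 1) = qPoch q m * (q ^ (m + 1) - 1) :=
  Finset.prod_range_succ _ _

lemma gauss_zero_right (q d : ℕ) : gaussBinomial q d 0 = 1 := by cases d <;> rfl

lemma gauss_eq_zero_of_lt (q : ℕ) : ∀ {d k : ℕ}, d < k → gaussBinomial q d k = 0
  | 0, _ + 1, _ => rfl
  | d + 1, k + 1, h => by
      rw [gaussBinomial, gauss_eq_zero_of_lt (q := q) (by omega),
        gauss_eq_zero_of_lt (q := q) (by omega)]
      simp

lemma gauss_self (q : ℕ) : ∀ d, gaussBinomial q d d = 1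
  | 0 => rfl
  | d + 1 => by
      rw [gaussBinomial, gauss_self q d, gauss_eq_zero_of_lt q (by omega)]
      simp

lemma gauss_mul_qPoch (q : ℕ) (hq : 1 ≤ q) :
    ∀ d n, n ≤ d → gaussBinomial q d n * qPoch q n * qPoch q (d - n) = qPoch q d := by
  intro d
  induction d with
  | zero => intro n hn; interval_cases n; simp [gauss_zero_right, qPoch_zero]
  | succ d ih =>
      intro n hn
      rcases Nat.lt_or_ge n (d + 1) with hlt | hge
      · match n with
        | 0 => simp [gauss_zero_right, qPoch_zero]
        | k + 1 =>
          have hk : k ≤ d := by omega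
          have hk1 : k + 1 ≤ d := by omega
          have e1 : gaussBinomial q (d + 1) (k + 1)
              = gaussBinomial q d k + q ^ (k + 1) * gaussBinomial q d (k + 1) := rfl
          have IH1 := ih k hk
          have IH2 := ih (k + 1) hk1
          have hdk : d + 1 - (k + 1) = (d - k - 1) + 1 := by omega
          have hdk2 : d - (k + 1) = d - k - 1 := by omega
          rw [hdk2] at IH2
          have hQn : qPoch q (k + 1) = qPoch q k * (q ^ (k + 1) - 1) := qPoch_succ q k
          have hQd : qPoch q (d - k - 1 + 1) = qPoch q (d - k - 1) * (q ^ (d - k - 1 + 1) - 1) :=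
            qPoch_succ q _
          have hQD : qPoch q (d + 1) = qPoch q d * (q ^ (d + 1) - 1) := qPoch_succ q d
          rw [e1, hdk, hQd, hQn, hQD]
          have hexp : d - k - 1 + 1 = d - k := by omega
          rw [hexp]
          -- arithmetic: (A + B*C) * (Qk * (q^{k+1}-1)) * (Qdk1 * (q^{d-k}-1)) with
          -- A*Qk*(Qdk1*(q^{d-k}-1)) = Qd  [IH1, since qPoch q (d-k) = Qdk1*(q^{d-k}-1)]
          have hrw : qPoch q (d - k) = qPoch q (d - k - 1) * (q ^ (d - k) - 1) := by
            conv_lhs => rw [show d - k = (d - k - 1) + 1 from by omega]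
            rw [qPoch_succ, hexp]
          rw [hrw] at IH1
          -- pure arithmetic now
          have key : (q ^ (k + 1) - 1) + q ^ (k + 1) * (q ^ (d - k) - 1) = q ^ (d + 1) - 1 := by
            have hmul : q ^ (k + 1) * q ^ (d - k) = q ^ (d + 1) := by
              rw [← pow_add]; congr 1; omega
            have h1 : 1 ≤ q ^ (k + 1) := Nat.one_le_pow _ _ hq
            have h2 : 1 ≤ q ^ (d - k) := Nat.one_le_pow _ _ hq
            have h3 : q ^ (k + 1) * (q ^ (d - k) - 1) = q ^ (d + 1) - q ^ (k + 1) := by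
              rw [Nat.mul_sub, hmul, mul_one]
            have h4 : q ^ (k + 1) ≤ q ^ (d + 1) := by
              calc q ^ (k+1) = q ^ (k+1) * 1 := by ring
              _ ≤ q ^ (k+1) * q ^ (d-k) := Nat.mul_le_mul_left _ h2
              _ = q ^ (d+1) := hmul
            omega
          calc (gaussBinomial q d k + q ^ (k + 1) * gaussBinomial q d (k + 1)) *
                (qPoch q k * (q ^ (k + 1) - 1)) * (qPoch q (d - k - 1) * (q ^ (d - k) - 1))
              = (gaussBinomial q d k * qPoch q k * (qPoch q (d - k - 1) * (q ^ (d - k) - 1))) *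
                  (q ^ (k + 1) - 1)
                + (q ^ (k + 1) * (q ^ (d - k) - 1)) *
                  (gaussBinomial q d (k + 1) * (qPoch q k * (q ^ (k + 1) - 1)) *
                    qPoch q (d - k - 1)) := by ring
            _ = qPoch q d * (q ^ (k + 1) - 1)
                + (q ^ (k + 1) * (q ^ (d - k) - 1)) * qPoch q d := by
                rw [IH1, ← hQn, IH2]
            _ = qPoch q d * ((q ^ (k + 1) - 1) + q ^ (k + 1) * (q ^ (d - k) - 1)) := by ring
            _ = qPoch q d * (q ^ (d + 1) - 1) := by rw [key]
      · have : n = d + 1 := by omega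
        subst this
        simp [gauss_self, qPoch_zero]



lemma prod_pow_sub_eq (q : ℕ) (hq : 1 ≤ q) (m : ℕ) :
    ∏ i ∈ range m, (q ^ m - q ^ i) = q ^ (∑ i ∈ range m, i) * qPoch q m := by
  have h1 : ∀ i ∈ range m, q ^ m - q ^ i = q ^ i * (q ^ (m - 1 - i + 1) - 1) := by
    intro i hi
    rw [mem_range] at hi
    rw [Nat.mul_sub, mul_one, ← pow_add]
    congr 2
    omega
  rw [Finset.prod_congr rfl h1, Finset.prod_mul_distrib, Finset.prod_pow_eq_pow_sum,
    Finset.prod_range_reflect (fun j => q ^ (j + 1) - 1) m]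
  rfl

lemma sum_range_add (a b : ℕ) :
    ∑ i ∈ range (a + b), i = (∑ i ∈ range a, i) + (∑ i ∈ range b, i) + a * b := by
  induction b with
  | zero => simp
  | succ b ih => rw [show a + (b+1) = (a+b)+1 from rfl, Finset.sum_range_succ, ih,
      Finset.sum_range_succ]; ring


section CardQuotIdeal

lemma card_quot_mul_card_ideal {R : Type*} [CommRing R] (I : Ideal R) :
    Nat.card (R ⧸ I) * Nat.card I = Nat.card R := by
  have h := AddSubgroup.index_mul_card (G := R) (H := I.toAddSubgroup)
  have h1 : (I.toAddSubgroup).index = Nat.card (R ⧸ I) := Submodule.cardQuot_apply I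
  have h2 : Nat.card I.toAddSubgroup = Nat.card I :=
    Nat.card_congr (Equiv.subtypeEquivRight (fun x => Iff.rfl))
  rw [← h, h1, h2]

lemma card_GL_field_eq {K : Type*} [Field K] [Fintype K] (q : ℕ) (hqc : Fintype.card K = q)
    (hq1 : 1 ≤ q) (s : ℕ) :
    Nat.card (GL (Fin s) K) = q ^ (∑ i ∈ Finset.range s, i) * qPoch q s := by
  subst hqc
  rw [Matrix.card_GL_field, ← prod_pow_sub_eq _ hq1 s]
  exact Fin.prod_univ_eq_prod_range (fun j => Fintype.card K ^ s - Fintype.card K ^ j) s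

end CardQuotIdeal

section GLcard
variable {R K : Type*} [CommRing R] [Field K] (ρ : R →+* K)

lemma isUnit_of_residue_det (hunit : ∀ a : R, IsUnit (ρ a) → IsUnit a)
    {s : ℕ} (G : Matrix (Fin s) (Fin s) R) (h : IsUnit ((G.map ρ).det)) : IsUnit G := by
  rw [Matrix.isUnit_iff_isUnit_det]
  exact hunit _ (by rw [RingHom.map_det]; exact h)

/-- The reduction map on `GL`. -/
noncomputable def glMap (s : ℕ) : GL (Fin s) R →* GL (Fin s) K :=
  Units.map (RingHom.mapMatrix ρ : Matrix (Fin s) (Fin s) R →+* Matrix (Fin s) (Fin s) K).toMonoidHom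

lemma glMap_surjective (hρ : Surjective ρ) (hunit : ∀ a : R, IsUnit (ρ a) → IsUnit a)
    (s : ℕ) : Surjective (glMap ρ s) := by
  intro u
  have : ∀ i j : Fin s, ∃ a : R, ρ a = (u : Matrix (Fin s) (Fin s) K) i j := fun i j => hρ _
  choose G hG using this
  have hmap : (Matrix.of G).map ρ = (u : Matrix (Fin s) (Fin s) K) := by
    ext i j; exact hG i j
  have hu : IsUnit (Matrix.of G) := by
    apply isUnit_of_residue_det ρ hunit
    rw [hmap]; exact (Matrix.isUnit_iff_isUnit_det _).mp u.isUnit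
  refine ⟨hu.unit, ?_⟩
  ext i j
  show ((hu.unit : Matrix (Fin s) (Fin s) R)).map ρ i j = _
  rw [hu.unit_spec, hmap]

/-- The kernel of the reduction map is in bijection with matrices with entries in the kernel
ideal. -/
noncomputable def glKerEquiv (hunit : ∀ a : R, IsUnit (ρ a) → IsUnit a) (s : ℕ) :
    {g : GL (Fin s) R // (g : Matrix (Fin s) (Fin s) R).map ρ = 1} ≃
      (Fin s → Fin s → {a : R // ρ a = 0}) where
  toFun g := fun i j => ⟨(g.1 : Matrix (Fin s) (Fin s) R) i j - (1 : Matrix (Fin s) (Fin s) R) i j, by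
    have := congrFun (congrFun g.2 i) j
    simp only [Matrix.map_apply] at this
    simp only [map_sub, this]
    have h1 : ρ ((1 : Matrix (Fin s) (Fin s) R) i j) = (1 : Matrix (Fin s) (Fin s) K) i j := by
      by_cases h : i = j <;> simp [Matrix.one_apply, h]
    rw [h1]
    simp⟩
  invFun N := by
    refine ⟨?_, ?_⟩
    · have hu : IsUnit ((1 : Matrix (Fin s) (Fin s) R) + Matrix.of (fun i j => (N i j).1)) := by
        apply isUnit_of_residue_det ρ hunit
        have : ((1 : Matrix (Fin s) (Fin s) R) + Matrix.of (fun i j => (N i j).1)).map ρ = 1 := by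
          ext i j
          simp only [Matrix.map_apply, Matrix.add_apply, map_add, (N i j).2, Matrix.of_apply]
          by_cases h : i = j <;> simp [Matrix.one_apply, h, (N i j).2]
        rw [this]; simp
      exact hu.unit
    · show (_ : Matrix (Fin s) (Fin s) R).map ρ = 1
      rw [IsUnit.unit_spec]
      ext i j
      simp only [Matrix.map_apply, Matrix.add_apply, map_add, Matrix.of_apply, (N i j).2]
      by_cases h : i = j <;> simp [Matrix.one_apply, h]
  left_inv g := by
    apply Subtype.ext; apply Units.ext
    rw [IsUnit.unit_spec]
    ext i j
    simp
  right_inv N := by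
    funext i j
    apply Subtype.ext
    simp [IsUnit.unit_spec]

lemma card_GL_eq_mul (hρ : Surjective ρ) (hunit : ∀ a : R, IsUnit (ρ a) → IsUnit a)
    [Finite R] (s : ℕ) :
    Nat.card (GL (Fin s) R)
      = Nat.card {a : R // ρ a = 0} ^ (s * s) * Nat.card (GL (Fin s) K) := by
  have hker : Nat.card ((glMap ρ s).ker)
      = Nat.card {a : R // ρ a = 0} ^ (s * s) := by
    have h1 : Nat.card ((glMap ρ s).ker)
        = Nat.card {g : GL (Fin s) R // (g : Matrix (Fin s) (Fin s) R).map ρ = 1} := by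
      apply Nat.card_congr
      apply Equiv.subtypeEquivRight
      intro g
      rw [MonoidHom.mem_ker, Units.ext_iff]
      rfl
    rw [h1, Nat.card_congr (glKerEquiv ρ hunit s)]
    have : Finite {a : R // ρ a = 0} := Subtype.finite
    rw [Nat.card_fun, Nat.card_fun]
    simp [Nat.card_eq_fintype_card, pow_mul]
  calc Nat.card (GL (Fin s) R)
      = Nat.card (GL (Fin s) R ⧸ (glMap ρ s).ker) * Nat.card ((glMap ρ s).ker) :=
        Subgroup.card_eq_card_quotient_mul_card_subgroup _
    _ = Nat.card (GL (Fin s) K) * Nat.card ((glMap ρ s).ker) := by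
        rw [Nat.card_congr (QuotientGroup.quotientKerEquivOfSurjective _
          (glMap_surjective ρ hρ hunit s)).toEquiv]
    _ = _ := by rw [hker]; ring

end GLcard

section Block
variable {R : Type*} [CommRing R]

/-- Units are equivalent to the subtype of elements that are units. -/
noncomputable def unitsEquivIsUnit {M : Type*} [Monoid M] : Mˣ ≃ {a : M // IsUnit a} where
  toFun u := ⟨u, u.isUnit⟩
  invFun a := a.2.unit
  left_inv u := Units.ext (by simp)
  right_inv a := Subtype.ext (by simp)

lemma isUnit_fromBlocks_triangular {n m : ℕ}
    (A : Matrix (Fin n) (Fin n) R) (hA : IsUnit A) (B : Matrix (Fin n) (Fin m) R)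
    (D : Matrix (Fin m) (Fin m) R) (hD : IsUnit D) :
    IsUnit (Matrix.fromBlocks A B 0 D) := by
  rw [Matrix.isUnit_iff_isUnit_det, Matrix.det_fromBlocks_zero₂₁]
  exact ((Matrix.isUnit_iff_isUnit_det _).mp hA).mul ((Matrix.isUnit_iff_isUnit_det _).mp hD)

lemma isUnit_det_blocks {n m : ℕ} (g : GL (Fin n ⊕ Fin m) R)
    (hg : ∀ (i : Fin m) (j : Fin n),
      (g : Matrix (Fin n ⊕ Fin m) (Fin n ⊕ Fin m) R) (Sum.inr i) (Sum.inl j) = 0) :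
    IsUnit ((g : Matrix (Fin n ⊕ Fin m) (Fin n ⊕ Fin m) R).toBlocks₁₁.det) ∧
    IsUnit ((g : Matrix (Fin n ⊕ Fin m) (Fin n ⊕ Fin m) R).toBlocks₂₂.det) := by
  set M : Matrix (Fin n ⊕ Fin m) (Fin n ⊕ Fin m) R := (g : Matrix (Fin n ⊕ Fin m) (Fin n ⊕ Fin m) R) with hM
  have h21 : M.toBlocks₂₁ = 0 := by ext i j; exact hg i j
  have hdet : IsUnit M.det := (Matrix.isUnit_iff_isUnit_det _).mp g.isUnit
  have hfb : M = Matrix.fromBlocks M.toBlocks₁₁ M.toBlocks₁₂ 0 M.toBlocks₂₂ := by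
    rw [← h21, Matrix.fromBlocks_toBlocks]
  rw [hfb, Matrix.det_fromBlocks_zero₂₁] at hdet
  exact ⟨isUnit_of_mul_isUnit_left hdet, isUnit_of_mul_isUnit_right hdet⟩

/-- Block upper triangular invertible matrices over `Fin n ⊕ Fin m`. -/
noncomputable def parabolicEquiv (n m : ℕ) :
    {g : GL (Fin n ⊕ Fin m) R //
        ∀ (i : Fin m) (j : Fin n),
          (g : Matrix (Fin n ⊕ Fin m) (Fin n ⊕ Fin m) R) (Sum.inr i) (Sum.inl j) = 0} ≃
      ({A : Matrix (Fin n) (Fin n) R // IsUnit A} × Matrix (Fin n) (Fin m) R ×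
        {D : Matrix (Fin m) (Fin m) R // IsUnit D}) where
  toFun g :=
    ⟨⟨(g.1 : Matrix (Fin n ⊕ Fin m) (Fin n ⊕ Fin m) R).toBlocks₁₁,
        (Matrix.isUnit_iff_isUnit_det _).mpr (isUnit_det_blocks g.1 g.2).1⟩,
      (g.1 : Matrix (Fin n ⊕ Fin m) (Fin n ⊕ Fin m) R).toBlocks₁₂,
      ⟨(g.1 : Matrix (Fin n ⊕ Fin m) (Fin n ⊕ Fin m) R).toBlocks₂₂,
        (Matrix.isUnit_iff_isUnit_det _).mpr (isUnit_det_blocks g.1 g.2).2⟩⟩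
  invFun x :=
    ⟨(isUnit_fromBlocks_triangular x.1.1 x.1.2 x.2.1 x.2.2.1 x.2.2.2).unit, fun i j => by
      have h := (isUnit_fromBlocks_triangular x.1.1 x.1.2 x.2.1 x.2.2.1 x.2.2.2).unit_spec
      have h2 := congrFun (congrFun (congrArg
        (fun (M : Matrix (Fin n ⊕ Fin m) (Fin n ⊕ Fin m) R) => M) h) (Sum.inr i)) (Sum.inl j)
      simpa using h2⟩
  left_inv g := by
    apply Subtype.ext; apply Units.ext
    rw [IsUnit.unit_spec]
    have h21 : (g.1 : Matrix (Fin n ⊕ Fin m) (Fin n ⊕ Fin m) R).toBlocks₂₁ = 0 := by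
      ext i j; exact g.2 i j
    conv_rhs => rw [← Matrix.fromBlocks_toBlocks
      (g.1 : Matrix (Fin n ⊕ Fin m) (Fin n ⊕ Fin m) R), h21]
  right_inv x := by
    have h := (isUnit_fromBlocks_triangular x.1.1 x.1.2 x.2.1 x.2.2.1 x.2.2.2).unit_spec
    refine Prod.ext (Subtype.ext ?_) (Prod.ext ?_ (Subtype.ext ?_)) <;>
      simp only [h, Matrix.toBlocks_fromBlocks₁₁, Matrix.toBlocks_fromBlocks₁₂,
        Matrix.toBlocks_fromBlocks₂₂]

lemma card_parabolic (n m : ℕ) [Finite R] :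
    Nat.card {g : GL (Fin n ⊕ Fin m) R //
        ∀ (i : Fin m) (j : Fin n),
          (g : Matrix (Fin n ⊕ Fin m) (Fin n ⊕ Fin m) R) (Sum.inr i) (Sum.inl j) = 0}
      = Nat.card (GL (Fin n) R) * Nat.card (GL (Fin m) R) * Nat.card R ^ (n * m) := by
  rw [Nat.card_congr (parabolicEquiv n m), Nat.card_prod, Nat.card_prod,
    ← Nat.card_congr (unitsEquivIsUnit (M := Matrix (Fin n) (Fin n) R)),
    ← Nat.card_congr (unitsEquivIsUnit (M := Matrix (Fin m) (Fin m) R))]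
  have h : Nat.card (Matrix (Fin n) (Fin m) R) = Nat.card R ^ (n * m) := by
    rw [Nat.card_congr (Matrix.of (m := Fin n) (n := Fin m) (α := R)).symm,
      Nat.card_fun, Nat.card_fun]
    simp only [Nat.card_eq_fintype_card, Fintype.card_fin]
    rw [← pow_mul, Nat.mul_comm]
  rw [h]
  ring
end Block

section Lift
variable {R K : Type*} [CommRing R] [Field K] (ρ : R →+* K)

lemma residue_linearIndependent {d s : ℕ}
    (hρ : Surjective ρ) (hunit : ∀ a : R, IsUnit (ρ a) → IsUnit a)
    (t : R) (ht : t ≠ 0) (htk : ∀ a, ρ a = 0 → t * a = 0)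
    (x : Fin s → (Fin d → R)) (hx : LinearIndependent R x) :
    LinearIndependent K (fun i => ρ ∘ x i) := by
  rw [Fintype.linearIndependent_iff]
  intro g hg
  choose c hc using fun i => hρ (g i)
  have hcoord : ∀ j, ρ ((∑ i, c i • x i) j) = 0 := by
    intro j
    have h1 := congrFun hg j
    simp only [Finset.sum_apply, Pi.smul_apply, Pi.zero_apply, Function.comp_apply, smul_eq_mul] at h1
    simp only [Finset.sum_apply, Pi.smul_apply, smul_eq_mul, map_sum, _root_.map_mul, hc]
    exact h1
  have hzero : ∑ i, (t * c i) • x i = 0 := by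
    have h2 : t • (∑ i, c i • x i) = 0 := by
      funext j
      simp only [Pi.smul_apply, smul_eq_mul, Pi.zero_apply]
      exact htk _ (hcoord j)
    rw [← h2, Finset.smul_sum]
    exact Finset.sum_congr rfl fun i _ => (smul_smul t (c i) (x i)).symm
  have hto := (Fintype.linearIndependent_iff.mp hx) (fun i => t * c i) hzero
  intro i
  by_contra h
  have hu : IsUnit (c i) := hunit _ (by rw [hc]; exact isUnit_iff_ne_zero.mpr h)
  rcases hu with ⟨u, hu⟩
  apply ht
  calc t = t * c i * ↑u⁻¹ := by rw [← hu, mul_assoc, Units.mul_inv, mul_one]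
  _ = 0 := by
        have h0 : t * c i = 0 := hto i
        rw [h0, zero_mul]

lemma exists_basis_extend [Finite K] {d s : ℕ} (hs : s ≤ d)
    (xb : Fin s → (Fin d → K)) (hxb : LinearIndependent K xb) :
    ∃ Y : Module.Basis (Fin d) K (Fin d → K), ∀ (j : Fin d) (h : (j : ℕ) < s), Y j = xb ⟨j, h⟩ := by
  classical
  have hinj : Injective xb := hxb.injective
  obtain ⟨b, _hbu, hsb, hspan, hind⟩ :=
    exists_linearIndepOn_id_extension ((linearIndepOn_id_range_iff hinj).mpr hxb) (Set.subset_univ _)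
  replace hind : LinearIndependent K ((↑) : b → (Fin d → K)) := hind
  haveI : Fintype ↥b := Fintype.ofFinite _
  have hB : ⊤ ≤ Submodule.span K (Set.range ((↑) : b → (Fin d → K))) := by
    rw [Subtype.range_coe]
    exact fun v _ => hspan (Set.mem_univ v)
  let B : Module.Basis ↥b K (Fin d → K) := Module.Basis.mk hind hB
  have hcardb : Fintype.card ↥b = d := by
    rw [← Module.finrank_eq_card_basis B]
    simp
  haveI : Fintype ↥(Set.range xb) := Fintype.ofFinite _
  have hcardr : Fintype.card ↥(Set.range xb) = s := by
    rw [Set.card_range_of_injective hinj, Fintype.card_fin]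
  haveI : DecidablePred (· ∈ Set.range xb) := Classical.decPred _
  haveI : Fintype ↥(b \ Set.range xb) := Fintype.ofFinite _
  have hcdiff : Fintype.card ↥(b \ Set.range xb) = d - s := by
    have h1 : (b \ Set.range xb).ncard = b.ncard - (Set.range xb).ncard :=
      Set.ncard_diff hsb (Set.toFinite _)
    have hb' : b.ncard = d := by
      rw [← Nat.card_coe_set_eq, Nat.card_eq_fintype_card, hcardb]
    have hr' : (Set.range xb).ncard = s := by
      rw [← Nat.card_coe_set_eq, Nat.card_eq_fintype_card, hcardr]
    rw [← Nat.card_eq_fintype_card, Nat.card_coe_set_eq, h1, hb', hr']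
  let e2 : Fin (d - s) ≃ ↥(b \ Set.range xb) :=
    Fintype.equivOfCardEq (by rw [hcdiff, Fintype.card_fin])
  let e : Fin d ≃ ↥b :=
    ((finCongr (show d = s + (d - s) by omega)).trans
      ((finSumFinEquiv.symm).trans
        ((Equiv.sumCongr (Equiv.ofInjective xb hinj) e2).trans (Equiv.Set.sumDiffSubset hsb))))
  refine ⟨B.reindex e.symm, ?_⟩
  intro j hj
  rw [Module.Basis.reindex_apply, Equiv.symm_symm]
  have h1 : e j = ⟨xb ⟨j, hj⟩, hsb (Set.mem_range_self _)⟩ := by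
    have hcast : (finCongr (show d = s + (d - s) by omega)) j = Fin.castAdd (d - s) ⟨j, hj⟩ := by
      apply Fin.ext; simp
    show (Equiv.Set.sumDiffSubset hsb) ((Equiv.sumCongr (Equiv.ofInjective xb hinj) e2)
      (finSumFinEquiv.symm ((finCongr (show d = s + (d - s) by omega)) j))) = _
    rw [hcast, finSumFinEquiv_symm_apply_castAdd]
    simp [Equiv.Set.sumDiffSubset_apply_inl, Equiv.ofInjective_apply, Set.inclusion]
  rw [h1]
  exact Module.Basis.mk_apply hind hB _

lemma isUnit_of_residue_det' (hunit : ∀ a : R, IsUnit (ρ a) → IsUnit a)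
    {s : ℕ} (G : Matrix (Fin s) (Fin s) R) (h : IsUnit ((G.map ρ).det)) : IsUnit G := by
  rw [Matrix.isUnit_iff_isUnit_det]
  exact hunit _ (by rw [RingHom.map_det]; exact h)

lemma mem_stdSubmodule {d n : ℕ} (x : Fin d → R) :
    x ∈ Submodule.pi Set.univ
        (fun i : Fin d => if (i : ℕ) < n then (⊤ : Submodule R R) else ⊥) ↔
      ∀ i : Fin d, n ≤ (i : ℕ) → x i = 0 := by
  rw [Submodule.mem_pi]
  constructor
  · intro h i hi
    have := h i (Set.mem_univ i)
    rw [if_neg (by omega)] at this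
    simpa using this
  · intro h i _
    by_cases hi : (i : ℕ) < n
    · rw [if_pos hi]; exact Submodule.mem_top
    · rw [if_neg hi]; simpa using h i (by omega)

lemma exists_GL_map [Finite R] [Finite K] [Nontrivial R]
    (hρ : Surjective ρ) (hunit : ∀ a : R, IsUnit (ρ a) → IsUnit a)
    (t : R) (ht : t ≠ 0) (htk : ∀ a, ρ a = 0 → t * a = 0)
    {d n : ℕ} (hn : n ≤ d) (V : Submodule R (Fin d → R))
    (hfree : Module.Free R V) (hrank : Module.finrank R V = n) :
    ∃ g : GL (Fin d) R,
      Submodule.map (Matrix.mulVecLin (g : Matrix (Fin d) (Fin d) R))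
        (Submodule.pi Set.univ
          (fun i : Fin d => if (i : ℕ) < n then (⊤ : Submodule R R) else ⊥)) = V := by
  classical
  haveI : Module.Finite R ↥V := Module.Finite.of_finite
  haveI := hfree
  let b0 : Module.Basis (Fin n) R ↥V := (Module.finBasis R ↥V).reindex (finCongr (by rw [hrank]))
  let x : Fin n → (Fin d → R) := fun i => (b0 i : Fin d → R)
  have hxV : ∀ i, x i ∈ V := fun i => (b0 i).2
  have hspan : Submodule.span R (Set.range x) = V := by
    have h1 : Set.range x = V.subtype '' Set.range b0 := by
      rw [← Set.range_comp]; rfl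
    rw [h1, ← Submodule.map_span, b0.span_eq, Submodule.map_subtype_top]
  have hxi : LinearIndependent R x := b0.linearIndependent.map' V.subtype V.ker_subtype
  have hxb : LinearIndependent K (fun i => ρ ∘ x i) :=
    residue_linearIndependent ρ hρ hunit t ht htk x hxi
  obtain ⟨Y, hY⟩ := exists_basis_extend hn _ hxb
  let G : Matrix (Fin d) (Fin d) R :=
    Matrix.of fun i j => if h : (j : ℕ) < n then x ⟨j, h⟩ i else surjInv hρ (Y j i)
  have hGmap : G.map ρ = Matrix.of (fun i j => Y j i) := by
    ext i j
    by_cases h : (j : ℕ) < n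
    · simp only [Matrix.map_apply, Matrix.of_apply, G, dif_pos h]
      rw [hY j h]
      rfl
    · simp only [Matrix.map_apply, Matrix.of_apply, G, dif_neg h]
      exact surjInv_eq hρ _
  have hdet : IsUnit ((G.map ρ).det) := by
    have heq : G.map ρ = (Pi.basisFun K (Fin d)).toMatrix Y := by
      rw [hGmap]
      ext i j
      rw [Module.Basis.toMatrix_apply, Pi.basisFun_repr]
      rfl
    rw [heq]
    haveI := (Pi.basisFun K (Fin d)).invertibleToMatrix Y
    exact Matrix.isUnit_det_of_invertible _
  have hG : IsUnit G := isUnit_of_residue_det' ρ hunit G hdet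
  refine ⟨hG.unit, ?_⟩
  rw [hG.unit_spec]
  have hcol : ∀ (v : Fin d → R), G.mulVec v = ∑ j, v j • (fun i => G i j) := by
    intro v
    funext i
    simp only [Matrix.mulVec, dotProduct, Finset.sum_apply, Pi.smul_apply, smul_eq_mul]
    exact Finset.sum_congr rfl fun j _ => mul_comm _ _
  apply le_antisymm
  · rintro _ ⟨v, hv, rfl⟩
    rw [Matrix.mulVecLin_apply, hcol]
    apply Submodule.sum_mem
    intro j _
    by_cases hj : (j : ℕ) < n
    · have hcolj : (fun i => G i j) = x ⟨j, hj⟩ := by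
        funext i; simp only [Matrix.of_apply, G, dif_pos hj]
      rw [hcolj]
      exact Submodule.smul_mem _ _ (hxV _)
    · rw [(mem_stdSubmodule v).mp hv j (by omega), zero_smul]
      exact Submodule.zero_mem _
  · rw [← hspan, Submodule.span_le]
    rintro _ ⟨i0, rfl⟩
    have hi0 : (i0 : ℕ) < n := i0.2
    refine ⟨Pi.single (⟨(i0 : ℕ), lt_of_lt_of_le hi0 hn⟩ : Fin d) 1, ?_, ?_⟩
    · rw [SetLike.mem_coe, mem_stdSubmodule]
      intro i hi
      apply Pi.single_eq_of_ne
      intro hcon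
      rw [hcon] at hi
      exact absurd hi (by simpa using Nat.not_le.mpr hi0)
    · rw [Matrix.mulVecLin_apply, Matrix.mulVec_single]
      funext i
      simp only [mul_one, Matrix.of_apply, G, dif_pos hi0, Pi.smul_apply, MulOpposite.op_one,
        one_smul, Matrix.col_def, Matrix.transpose_apply]
end Lift

section Stab
variable {R : Type*} [CommRing R]

lemma mem_stdSubmodule' {d n : ℕ} (x : Fin d → R) :
    x ∈ Submodule.pi Set.univ
        (fun i : Fin d => if (i : ℕ) < n then (⊤ : Submodule R R) else ⊥) ↔
      ∀ i : Fin d, n ≤ (i : ℕ) → x i = 0 := by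
  rw [Submodule.mem_pi]
  constructor
  · intro h i hi
    have := h i (Set.mem_univ i)
    rw [if_neg (by omega)] at this
    simpa using this
  · intro h i _
    by_cases hi : (i : ℕ) < n
    · rw [if_pos hi]; exact Submodule.mem_top
    · rw [if_neg hi]; simpa using h i (by omega)

lemma stab_iff [Finite R] {d n : ℕ} (g : GL (Fin d) R) :
    Submodule.map (Matrix.mulVecLin (g : Matrix (Fin d) (Fin d) R))
        (Submodule.pi Set.univ
          (fun i : Fin d => if (i : ℕ) < n then (⊤ : Submodule R R) else ⊥)) =
      Submodule.pi Set.univ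
          (fun i : Fin d => if (i : ℕ) < n then (⊤ : Submodule R R) else ⊥) ↔
    ∀ i j : Fin d, n ≤ (i : ℕ) → (j : ℕ) < n →
      (g : Matrix (Fin d) (Fin d) R) i j = 0 := by
  classical
  set E := Submodule.pi Set.univ
      (fun i : Fin d => if (i : ℕ) < n then (⊤ : Submodule R R) else ⊥) with hE
  set G : Matrix (Fin d) (Fin d) R := (g : Matrix (Fin d) (Fin d) R) with hG
  constructor
  · intro h i j hi hj
    have hj' : Pi.single j (1 : R) ∈ E := by
      rw [hE, mem_stdSubmodule']
      intro i' hi'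
      exact Pi.single_eq_of_ne (fun hcon => by rw [hcon] at hi'; omega) 1
    have : G.mulVecLin (Pi.single j 1) ∈ E := by
      rw [← h]
      exact Submodule.mem_map_of_mem hj'
    rw [hE, mem_stdSubmodule'] at this
    have h2 := this i hi
    rw [Matrix.mulVecLin_apply, Matrix.mulVec_single] at h2
    simpa using h2
  · intro h
    have hle : Submodule.map G.mulVecLin E ≤ E := by
      rintro _ ⟨v, hv, rfl⟩
      simp only [SetLike.mem_coe] at hv
      rw [hE, mem_stdSubmodule'] at hv
      rw [mem_stdSubmodule']
      intro i hi
      rw [Matrix.mulVecLin_apply]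
      show ∑ j, G i j * v j = 0
      apply Finset.sum_eq_zero
      intro j _
      by_cases hj : (j : ℕ) < n
      · rw [h i j hi hj, zero_mul]
      · rw [hv j (by omega), mul_zero]
    have hinj : Injective G.mulVecLin := by
      have hleft : LeftInverse ((g⁻¹ : GL (Fin d) R) : Matrix (Fin d) (Fin d) R).mulVecLin
          G.mulVecLin := by
        intro v
        have h1 : ((g⁻¹ : GL (Fin d) R) : Matrix (Fin d) (Fin d) R) * G = 1 := by
          rw [hG, ← Units.val_mul, inv_mul_cancel, Units.val_one]
        have h2 := congrFun (congrArg DFunLike.coe (Matrix.mulVecLin_mul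
          ((g⁻¹ : GL (Fin d) R) : Matrix (Fin d) (Fin d) R) G)) v
        rw [h1] at h2
        simpa using h2.symm
      exact hleft.injective
    have hcard : Nat.card ↥(Submodule.map G.mulVecLin E) = Nat.card ↥E :=
      (Nat.card_congr (Submodule.equivMapOfInjective _ hinj E).toEquiv).symm
    apply SetLike.coe_injective
    apply Set.eq_of_subset_of_ncard_le hle
    rw [← Nat.card_coe_set_eq, ← Nat.card_coe_set_eq,
      SetLike.coe_sort_coe, SetLike.coe_sort_coe, hcard]

end Stab

section Reidx
variable {R : Type*} [CommRing R]

/-- Transport the block-zero condition along `Fin d ≃ Fin n ⊕ Fin (d - n)`. -/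
noncomputable def blockCondEquiv {d n : ℕ} (hn : n ≤ d) :
    {g : GL (Fin d) R // ∀ i j : Fin d, n ≤ (i : ℕ) → (j : ℕ) < n →
        (g : Matrix (Fin d) (Fin d) R) i j = 0} ≃
      {g : GL (Fin n ⊕ Fin (d - n)) R // ∀ (i : Fin (d - n)) (j : Fin n),
        (g : Matrix (Fin n ⊕ Fin (d - n)) (Fin n ⊕ Fin (d - n)) R) (Sum.inr i) (Sum.inl j) = 0} := by
  have hd : d = n + (d - n) := by omega
  let e : Fin d ≃ Fin n ⊕ Fin (d - n) := (finCongr hd).trans finSumFinEquiv.symm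
  have he1 : ∀ j : Fin n, ((e.symm (Sum.inl j) : Fin d) : ℕ) = (j : ℕ) := by
    intro j
    show (((finCongr hd).symm (finSumFinEquiv (Sum.inl j)) : Fin d) : ℕ) = _
    simp
  have he2 : ∀ i : Fin (d - n), ((e.symm (Sum.inr i) : Fin d) : ℕ) = n + (i : ℕ) := by
    intro i
    show (((finCongr hd).symm (finSumFinEquiv (Sum.inr i)) : Fin d) : ℕ) = _
    simp
  refine Equiv.subtypeEquiv
    (Units.mapEquiv ((Matrix.reindexAlgEquiv R R e).toRingEquiv.toMulEquiv)).toEquiv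
    (fun g => ?_)
  constructor
  · intro h i j
    have hval : ((Units.mapEquiv ((Matrix.reindexAlgEquiv R R e).toRingEquiv.toMulEquiv)).toEquiv g
          : Matrix (Fin n ⊕ Fin (d - n)) (Fin n ⊕ Fin (d - n)) R)
        = Matrix.reindex e e (g : Matrix (Fin d) (Fin d) R) := rfl
    rw [hval, Matrix.reindex_apply, Matrix.submatrix_apply]
    exact h _ _ (by rw [he2]; omega) (by rw [he1]; exact j.2)
  · intro h i j hi hj
    have hval : ((Units.mapEquiv ((Matrix.reindexAlgEquiv R R e).toRingEquiv.toMulEquiv)).toEquiv g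
          : Matrix (Fin n ⊕ Fin (d - n)) (Fin n ⊕ Fin (d - n)) R)
        = Matrix.reindex e e (g : Matrix (Fin d) (Fin d) R) := rfl
    have h2 := h ⟨(i : ℕ) - n, by omega⟩ ⟨(j : ℕ), hj⟩
    rw [hval, Matrix.reindex_apply, Matrix.submatrix_apply] at h2
    have hii : e.symm (Sum.inr ⟨(i : ℕ) - n, by omega⟩) = i := by
      apply Fin.ext
      rw [he2]
      show n + ((i : ℕ) - n) = (i : ℕ)
      omega
    have hjj : e.symm (Sum.inl ⟨(j : ℕ), hj⟩) = j := by
      apply Fin.ext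
      rw [he1]
    rw [hii, hjj] at h2
    exact h2
end Reidx

/-- `GL_d(O_r)` acts transitively on the free rank-`n` submodules of `O_r^d`, and the
stabilizer of the standard submodule `⟨e_1,…,e_n⟩` has index `(d choose n)_q · q^{(r-1)n(d-n)}`
(stated as: card of stabilizer times the index equals the card of the group). -/
theorem GL_transitive_on_free_submodules
    (O : Type*) [CommRing O] [IsDomain O] [IsDedekindDomain O]
    (p : Ideal O) (hp : p.IsPrime) (hp0 : p ≠ ⊥) (r : ℕ) (hr : 1 ≤ r) (d n : ℕ)
    (hn : n ≤ d) [Finite (O ⧸ p)] (q : ℕ) (hq : Nat.card (O ⧸ p) = q) :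
    (∀ V W : Submodule (O ⧸ p ^ r) (Fin d → O ⧸ p ^ r),
      (Module.Free (O ⧸ p ^ r) V ∧ Module.finrank (O ⧸ p ^ r) V = n) →
      (Module.Free (O ⧸ p ^ r) W ∧ Module.finrank (O ⧸ p ^ r) W = n) →
      ∃ g : GL (Fin d) (O ⧸ p ^ r),
        Submodule.map (Matrix.mulVecLin (g : Matrix (Fin d) (Fin d) (O ⧸ p ^ r))) V = W) ∧
    (Nat.card {g : GL (Fin d) (O ⧸ p ^ r) //
        Submodule.map (Matrix.mulVecLin (g : Matrix (Fin d) (Fin d) (O ⧸ p ^ r)))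
          (Submodule.pi Set.univ
            (fun i : Fin d => if (i : ℕ) < n then (⊤ : Submodule (O ⧸ p ^ r) (O ⧸ p ^ r)) else ⊥)) =
          Submodule.pi Set.univ
            (fun i : Fin d => if (i : ℕ) < n then (⊤ : Submodule (O ⧸ p ^ r) (O ⧸ p ^ r)) else ⊥)} *
      (gaussBinomial q d n * q ^ ((r - 1) * n * (d - n))) =
      Nat.card (GL (Fin d) (O ⧸ p ^ r))) := by
  classical
  haveI : Fintype (O ⧸ p) := Fintype.ofFinite _
  have hq1 : 1 ≤ q := by rw [← hq]; exact Nat.card_pos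
  haveI hpm : p.IsMaximal := hp.isMaximal hp0
  letI : Field (O ⧸ p) := Ideal.Quotient.field p
  have hrne : r ≠ 0 := by omega
  have hple : p ^ r ≤ p := Ideal.pow_le_self hrne
  set ρ : (O ⧸ p ^ r) →+* (O ⧸ p) := Ideal.Quotient.factor hple with hρdef
  have hρ : Surjective ρ := by
    intro a
    obtain ⟨x, rfl⟩ := Ideal.Quotient.mk_surjective a
    exact ⟨Ideal.Quotient.mk _ x, Ideal.Quotient.factor_mk _ _⟩
  have hnil : ∀ a : O ⧸ p ^ r, ρ a = 0 → IsNilpotent a := by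
    intro a ha
    obtain ⟨x, rfl⟩ := Ideal.Quotient.mk_surjective a
    rw [hρdef, Ideal.Quotient.factor_mk, Ideal.Quotient.eq_zero_iff_mem] at ha
    exact ⟨r, by rw [← map_pow, Ideal.Quotient.eq_zero_iff_mem]; exact Ideal.pow_mem_pow ha r⟩
  have hunit : ∀ a : O ⧸ p ^ r, IsUnit (ρ a) → IsUnit a := by
    intro a ha
    obtain ⟨u, hu⟩ := ha
    obtain ⟨b, hb⟩ := hρ ((u⁻¹ : (O ⧸ p)ˣ) : O ⧸ p)
    have h1 : ρ (a * b - 1) = 0 := by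
      rw [_root_.map_sub, _root_.map_mul, hb, _root_.map_one, ← hu, Units.mul_inv, sub_self]
    have h3 : IsUnit (1 - (-(a * b - 1))) := ((hnil _ h1).neg).isUnit_one_sub
    have h4 : (1 : O ⧸ p ^ r) - (-(a * b - 1)) = a * b := by ring
    rw [h4] at h3
    exact isUnit_of_mul_isUnit_left h3
  have hr1 : r - 1 + 1 = r := by omega
  obtain ⟨x0, hx0mem, hx0not⟩ := SetLike.exists_of_lt (Ideal.pow_succ_lt_pow hp0 (r - 1))
  rw [hr1] at hx0not
  have ht : (Ideal.Quotient.mk (p ^ r)) x0 ≠ 0 := by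
    rw [Ne, Ideal.Quotient.eq_zero_iff_mem]
    exact hx0not
  have htk : ∀ a, ρ a = 0 → (Ideal.Quotient.mk (p ^ r)) x0 * a = 0 := by
    intro a ha
    obtain ⟨y, rfl⟩ := Ideal.Quotient.mk_surjective a
    rw [hρdef, Ideal.Quotient.factor_mk, Ideal.Quotient.eq_zero_iff_mem] at ha
    rw [← _root_.map_mul, Ideal.Quotient.eq_zero_iff_mem]
    have hm : x0 * y ∈ p ^ (r - 1) * p := Ideal.mul_mem_mul hx0mem ha
    rwa [← pow_succ, hr1] at hm
  haveI : p.IsPrime := hp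
  have hcardR : Nat.card (O ⧸ p ^ r) = q ^ r := by
    have h1 : Submodule.cardQuot (p ^ r : Ideal O) = Submodule.cardQuot (p : Ideal O) ^ r :=
      cardQuot_pow_of_prime hp0
    rw [Submodule.cardQuot_apply, Submodule.cardQuot_apply, hq] at h1
    exact h1
  haveI hfinR : Finite (O ⧸ p ^ r) :=
    Nat.finite_of_card_ne_zero (by rw [hcardR]; positivity)
  haveI : Nontrivial (O ⧸ p ^ r) := by
    refine Ideal.Quotient.nontrivial_iff.mpr (fun htop => hp.ne_top (top_le_iff.mp ?_))
    rw [← htop]; exact hple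
  have hker : Nat.card {a : O ⧸ p ^ r // ρ a = 0} = q ^ (r - 1) := by
    have e0 : Nat.card {a : O ⧸ p ^ r // ρ a = 0} = Nat.card (RingHom.ker ρ) :=
      Nat.card_congr (Equiv.subtypeEquivRight (fun a => by
        rw [RingHom.mem_ker]))
    have e1 : Nat.card ((O ⧸ p ^ r) ⧸ RingHom.ker ρ) = q := by
      rw [Nat.card_congr (RingHom.quotientKerEquivOfSurjective hρ).toEquiv, hq]
    have e2 := card_quot_mul_card_ideal (RingHom.ker ρ)
    rw [e1, hcardR] at e2
    have e3 : q ^ r = q * q ^ (r - 1) := by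
      conv_lhs => rw [show r = (r - 1) + 1 from by omega]
      rw [pow_succ']
    have e4 := Nat.eq_of_mul_eq_mul_left (show 0 < q by omega) (e2.trans e3)
    rw [e0]
    exact e4
  constructor
  · intro V W hV hW
    obtain ⟨gV, hgV⟩ := exists_GL_map ρ hρ hunit _ ht htk hn V hV.1 hV.2
    obtain ⟨gW, hgW⟩ := exists_GL_map ρ hρ hunit _ ht htk hn W hW.1 hW.2
    refine ⟨gW * gV⁻¹, ?_⟩
    have hVE : Submodule.map (Matrix.mulVecLin
        ((gV⁻¹ : GL (Fin d) (O ⧸ p ^ r)) : Matrix (Fin d) (Fin d) (O ⧸ p ^ r))) V =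
        Submodule.pi Set.univ
          (fun i : Fin d => if (i : ℕ) < n then (⊤ : Submodule (O ⧸ p ^ r) (O ⧸ p ^ r)) else ⊥) := by
      rw [← hgV, ← Submodule.map_comp, ← Matrix.mulVecLin_mul,
        show ((gV⁻¹ : GL (Fin d) (O ⧸ p ^ r)) : Matrix (Fin d) (Fin d) (O ⧸ p ^ r)) *
            (gV : Matrix (Fin d) (Fin d) (O ⧸ p ^ r)) = 1 from by
          rw [← Units.val_mul, inv_mul_cancel, Units.val_one],
        Matrix.mulVecLin_one, Submodule.map_id]
    rw [show ((gW * gV⁻¹ : GL (Fin d) (O ⧸ p ^ r)) : Matrix (Fin d) (Fin d) (O ⧸ p ^ r)) =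
        (gW : Matrix (Fin d) (Fin d) (O ⧸ p ^ r)) *
          ((gV⁻¹ : GL (Fin d) (O ⧸ p ^ r)) : Matrix (Fin d) (Fin d) (O ⧸ p ^ r)) from
        Units.val_mul _ _,
      Matrix.mulVecLin_mul, Submodule.map_comp, hVE, hgW]
  · have hqc : Fintype.card (O ⧸ p) = q := by rw [← Nat.card_eq_fintype_card, hq]
    have hGLR : ∀ s' : ℕ, Nat.card (GL (Fin s') (O ⧸ p ^ r)) =
        (q ^ (r - 1)) ^ (s' * s') * (q ^ (∑ i ∈ Finset.range s', i) * qPoch q s') := by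
      intro s'
      rw [card_GL_eq_mul ρ hρ hunit s', hker, card_GL_field_eq q hqc hq1 s']
    have hstab : Nat.card {g : GL (Fin d) (O ⧸ p ^ r) //
        Submodule.map (Matrix.mulVecLin (g : Matrix (Fin d) (Fin d) (O ⧸ p ^ r)))
          (Submodule.pi Set.univ
            (fun i : Fin d => if (i : ℕ) < n then (⊤ : Submodule (O ⧸ p ^ r) (O ⧸ p ^ r)) else ⊥)) =
          Submodule.pi Set.univ
            (fun i : Fin d => if (i : ℕ) < n then (⊤ : Submodule (O ⧸ p ^ r) (O ⧸ p ^ r)) else ⊥)} =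
        Nat.card (GL (Fin n) (O ⧸ p ^ r)) * Nat.card (GL (Fin (d - n)) (O ⧸ p ^ r)) *
          Nat.card (O ⧸ p ^ r) ^ (n * (d - n)) := by
      rw [Nat.card_congr (Equiv.subtypeEquivRight (fun g => stab_iff g)),
        Nat.card_congr (blockCondEquiv hn), card_parabolic]
    rw [hstab, hGLR n, hGLR (d - n), hGLR d, hcardR, ← gauss_mul_qPoch q hq1 d n hn]
    have hSd : (∑ i ∈ Finset.range d, i) =
        (∑ i ∈ Finset.range n, i) + (∑ i ∈ Finset.range (d - n), i) + n * (d - n) := by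
      conv_lhs => rw [show d = n + (d - n) from by omega]
      rw [sum_range_add]
    rw [hSd]
    have hdd : d * d = (n + (d - n)) * (n + (d - n)) := by
      rw [show n + (d - n) = d from by omega]
    rw [hdd]
    obtain ⟨s, rfl⟩ : ∃ s, r = s + 1 := ⟨r - 1, by omega⟩
    simp only [Nat.add_sub_cancel]
    set m := d - n
    set Sn := ∑ i ∈ Finset.range n, i
    set Sm := ∑ i ∈ Finset.range m, i
    set G := gaussBinomial q d n
    set Qn := qPoch q n
    set Qm := qPoch q m
    rw [← pow_mul, ← pow_mul, ← pow_mul]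
    ring
end

section
/- Let V ≤ O_r^d and n < d. Then exactly one of the following holds: (1) V is not generated by n elements, and V is contained in no free rank-n submodule; (2) V is free of rank n, and is contained in exactly one free rank-n submodule (itself); (3) V is generated by n elements but is not free of rank n, and is contained in at least two distinct free rank-n submodules of O_r^d. -/
section TrichotomyAux

open Submodule Set Module

attribute [local instance] Classical.propDecidable

universe u v

/-! ### A `π`-adic valuation on a chain ring -/

section Nu
variable {R : Type u} [CommRing R] (π : R) (r : ℕ)

/-- The order of vanishing with respect to `π`, capped at `r`. -/
noncomputable def trichAux_nuA (x : R) : ℕ :=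
  Nat.findGreatest (fun a => x ∈ Ideal.span {π ^ a}) r

local notation "nuA" => trichAux_nuA

theorem trichAux_nuA_le (x : R) : nuA π r x ≤ r := Nat.findGreatest_le r

theorem trichAux_mem_nuA (x : R) : x ∈ Ideal.span {π ^ nuA π r x} := by
  refine Nat.findGreatest_spec (P := fun a => x ∈ Ideal.span {π ^ a}) (m := 0) (Nat.zero_le r) ?_
  simp [Ideal.mem_span_singleton]

theorem trichAux_pow_nuA_dvd (x : R) : π ^ nuA π r x ∣ x :=
  Ideal.mem_span_singleton.mp (trichAux_mem_nuA π r x)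

theorem trichAux_le_nuA {x : R} {a : ℕ} (ha : a ≤ r) (hx : x ∈ Ideal.span {π ^ a}) :
    a ≤ nuA π r x :=
  Nat.le_findGreatest ha hx

variable (hπ : π ^ r = 0) (H : ∀ x : R, ∃ (a : ℕ) (u : Rˣ), x = (u : R) * π ^ a)

include hπ in
theorem trichAux_eq_zero_of_nuA_eq {x : R} (h : nuA π r x = r) : x = 0 := by
  have := trichAux_mem_nuA π r x
  rw [h, hπ, Ideal.mem_span_singleton, zero_dvd_iff] at this
  exact this

theorem trichAux_nuA_zero : nuA π r (0 : R) = r :=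
  le_antisymm (trichAux_nuA_le π r 0) (trichAux_le_nuA π r le_rfl (by simp))

include hπ H in
theorem trichAux_exists_unit_nuA {x : R} (hx : x ≠ 0) :
    ∃ u : Rˣ, x = (u : R) * π ^ nuA π r x := by
  obtain ⟨a, u, rfl⟩ := H x
  have ha : a ≤ r := by
    by_contra hlt
    push_neg at hlt
    have h0 : π ^ a = 0 := by
      have h1 : π ^ a = π ^ r * π ^ (a - r) := by rw [← pow_add]; congr 1; omega
      rw [h1, hπ, zero_mul]
    exact hx (by rw [h0, mul_zero])
  have h1 : a ≤ nuA π r ((u:R) * π ^ a) :=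
    trichAux_le_nuA π r ha (Ideal.mem_span_singleton.mpr ⟨u, by ring⟩)
  have h2 : nuA π r ((u:R) * π ^ a) ≤ a := by
    by_contra hlt
    push_neg at hlt
    obtain ⟨c, hc⟩ := trichAux_pow_nuA_dvd π r ((u:R) * π ^ a)
    set b := nuA π r ((u:R) * π ^ a) with hb
    have hsplit : π ^ b = π ^ a * (π * π ^ (b - a - 1)) := by
      rw [← pow_succ', ← pow_add]; congr 1; omega
    have key : π ^ a * ((u:R) - π * π ^ (b - a - 1) * c) = 0 := by
      have h3 : (u:R) * π ^ a = π ^ a * (π * π ^ (b - a - 1)) * c := by rw [← hsplit, ← hc]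
      linear_combination h3
    have hunit : IsUnit ((u:R) - π * π ^ (b - a - 1) * c) := by
      have hnil : IsNilpotent (-(π * π ^ (b - a - 1) * c)) := by
        refine IsNilpotent.neg ?_
        have hπn : IsNilpotent π := ⟨r, hπ⟩
        exact (Commute.all _ _).isNilpotent_mul_right
          ((Commute.all _ _).isNilpotent_mul_right hπn)
      have := hnil.isUnit_add_left_of_commute u.isUnit (Commute.all _ _)
      simpa [sub_eq_add_neg, add_comm] using this
    have h4 : π ^ a = 0 := (hunit.mul_left_eq_zero).mp key
    exact hx (by rw [h4, mul_zero])
  have heq : nuA π r ((u:R) * π ^ a) = a := le_antisymm h2 h1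
  exact ⟨u, by rw [heq]⟩

include hπ H in
theorem trichAux_dvd_of_nuA_le {x y : R} (h : nuA π r x ≤ nuA π r y) : x ∣ y := by
  rcases eq_or_ne x 0 with rfl | hx
  · have hx' := trichAux_nuA_zero π r
    rw [hx'] at h
    have hy : nuA π r y = r := le_antisymm (trichAux_nuA_le π r y) h
    rw [trichAux_eq_zero_of_nuA_eq π r hπ hy]
  · obtain ⟨u, hu⟩ := trichAux_exists_unit_nuA π r hπ H hx
    obtain ⟨e, he⟩ := dvd_trans (pow_dvd_pow π h) (trichAux_pow_nuA_dvd π r y)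
    refine ⟨(u⁻¹ : Rˣ) * e, ?_⟩
    calc y = π ^ nuA π r x * e := he
      _ = ((u:R) * (u⁻¹:Rˣ)) * (π ^ nuA π r x * e) := by rw [Units.mul_inv, one_mul]
      _ = ((u:R) * π ^ nuA π r x) * ((u⁻¹:Rˣ) * e) := by ring
      _ = x * ((u⁻¹:Rˣ) * e) := by rw [← hu]

include hπ in
theorem trichAux_nuA_lt_of_ne {x : R} (hx : x ≠ 0) : nuA π r x < r :=
  lt_of_le_of_ne (trichAux_nuA_le π r x) (fun h => hx (trichAux_eq_zero_of_nuA_eq π r hπ h))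

end Nu

/-! ### Smith normal form over a chain ring -/

section SNF
variable {R : Type u} [CommRing R]

local notation "nuA" => trichAux_nuA

theorem trichAux_chain_snf (π : R) (r : ℕ) (hπ : π ^ r = 0)
    (H : ∀ x : R, ∃ (a : ℕ) (u : Rˣ), x = (u : R) * π ^ a) :
    ∀ (m : ℕ) {d : ℕ} {M : Type v} [AddCommGroup M] [Module R M] (b : Basis (Fin d) R M)
      (s : Fin m → M),
      ∃ (f : Basis (Fin d) R M) (a : Fin d → ℕ),
        (∀ i, a i ≤ r) ∧ (∀ i : Fin d, m ≤ (i : ℕ) → a i = r) ∧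
        span R (range s) = span R (range fun i => π ^ a i • f i) := by
  intro m
  induction m with
  | zero =>
    intro d M _ _ b s
    refine ⟨b, fun _ => r, fun _ => le_rfl, fun _ _ => rfl, ?_⟩
    have h1 : range s = ∅ := by
      simp [range_eq_empty]
    rw [h1, span_empty]
    symm
    rw [span_eq_bot]
    rintro _ ⟨i, rfl⟩
    simp [hπ]
  | succ m ih =>
    intro d M _ _ b s
    by_cases hz : ∀ i, s i = 0
    · refine ⟨b, fun _ => r, fun _ => le_rfl, fun _ _ => rfl, ?_⟩
      rw [span_eq_bot.mpr (by rintro _ ⟨i, rfl⟩; exact hz i)]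
      symm
      rw [span_eq_bot]
      rintro _ ⟨i, rfl⟩
      simp [hπ]
    · push_neg at hz
      obtain ⟨i₁, hi₁⟩ := hz
      have hj : ∃ j₁, b.repr (s i₁) j₁ ≠ 0 := by
        by_contra hcon
        push_neg at hcon
        exact hi₁ (b.repr.map_eq_zero_iff.mp (Finsupp.ext hcon))
      obtain ⟨j₁, hj₁⟩ := hj
      cases d with
      | zero => exact j₁.elim0
      | succ d' =>
        obtain ⟨q0, -, hq0⟩ := Finset.exists_min_image Finset.univ
          (fun q : Fin (m+1) × Fin (d'+1) => nuA π r (b.repr (s q.1) q.2))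
          ⟨(i₁, j₁), Finset.mem_univ _⟩
        set i₀ := q0.1 with hi₀
        set j₀ := q0.2 with hj₀
        set x₀ := b.repr (s i₀) j₀ with hx₀def
        set a₀ := nuA π r x₀ with ha₀def
        have hmin : ∀ k j, a₀ ≤ nuA π r (b.repr (s k) j) := fun k j =>
          hq0 (k, j) (Finset.mem_univ _)
        have ha₀lt : a₀ < r := lt_of_le_of_lt (hmin i₁ j₁) (trichAux_nuA_lt_of_ne π r hπ hj₁)
        have ha₀le : a₀ ≤ r := le_of_lt ha₀lt
        have hx₀ : x₀ ≠ 0 := by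
          intro h
          rw [h] at ha₀def
          rw [ha₀def, trichAux_nuA_zero] at ha₀lt
          exact lt_irrefl _ ha₀lt
        obtain ⟨u, hu⟩ := trichAux_exists_unit_nuA π r hπ H hx₀
        have hdvd : ∀ k, x₀ ∣ b.repr (s k) j₀ := fun k =>
          trichAux_dvd_of_nuA_le π r hπ H (hmin k j₀)
        choose c hc using hdvd
        set N := LinearMap.ker (b.coord j₀) with hNdef
        have hvli : LinearIndependent R (fun i : Fin d' => b (j₀.succAbove i)) :=
          b.linearIndependent.comp _ Fin.succAbove_right_injective
        have hmemN : ∀ i, b (j₀.succAbove i) ∈ N := by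
          intro i
          simp only [hNdef, LinearMap.mem_ker, Basis.coord_apply, Basis.repr_self_apply]
          rw [if_neg (Fin.succAbove_ne j₀ i)]
        have hNle : span R (range fun i : Fin d' => b (j₀.succAbove i)) ≤ N := by
          rw [span_le]
          rintro _ ⟨i, rfl⟩
          exact hmemN i
        have hspanN : span R (range fun i : Fin d' => b (j₀.succAbove i)) = N := by
          refine le_antisymm hNle ?_
          intro x hx
          have htop : span R (range fun i : Fin d' => b (j₀.succAbove i)) ⊔ span R {b j₀} = ⊤ := by
            rw [eq_top_iff, ← b.span_eq, span_le]
            rintro _ ⟨j, rfl⟩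
            rcases eq_or_ne j j₀ with rfl | hne
            · exact Submodule.mem_sup_right (subset_span rfl)
            · obtain ⟨i, hi⟩ := Fin.exists_succAbove_eq hne
              exact Submodule.mem_sup_left
                (subset_span ⟨i, show b (j₀.succAbove i) = b j from by rw [hi]⟩)
          have hxmem : x ∈ span R (range fun i : Fin d' => b (j₀.succAbove i)) ⊔ span R {b j₀} :=
            htop ▸ Submodule.mem_top
          obtain ⟨y, hy, z, hz, rfl⟩ := Submodule.mem_sup.mp hxmem
          obtain ⟨tt, rfl⟩ := Submodule.mem_span_singleton.mp hz
          have hcy : b.coord j₀ y = 0 := hNle hy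
          have hcx : b.coord j₀ (y + tt • b j₀) = 0 := hx
          rw [map_add, hcy, zero_add, map_smul, Basis.coord_apply, Basis.repr_self_apply,
            if_pos rfl, smul_eq_mul, mul_one] at hcx
          rw [hcx, zero_smul, add_zero]
          exact hy
        set Nb : Basis (Fin d') R N := (Basis.span hvli).map (LinearEquiv.ofEq _ _ hspanN)
          with hNb
        have htmem : ∀ k : Fin m, s (i₀.succAbove k) - c (i₀.succAbove k) • s i₀ ∈ N := by
          intro k
          simp only [hNdef, LinearMap.mem_ker, map_sub, map_smul, Basis.coord_apply,
            smul_eq_mul]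
          rw [hc (i₀.succAbove k), ← hx₀def]
          ring
        set t : Fin m → N := fun k => ⟨_, htmem k⟩ with ht
        obtain ⟨f', a', ha'le, ha'tail, hspan'⟩ := ih Nb t
        have hdvd2 : ∀ j, π ^ a₀ ∣ b.repr (s i₀) j := fun j =>
          dvd_trans (pow_dvd_pow π (hmin i₀ j)) (trichAux_pow_nuA_dvd π r _)
        choose e he using hdvd2
        set e' : Fin (d'+1) → R := fun j => if j = j₀ then (u : R) else e j with he'
        set w : M := ∑ j, e' j • b j with hw
        have hreprw : ∀ j, b.repr w j = e' j := by
          intro j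
          rw [hw, b.repr_sum_self]
        have hsmulw : π ^ a₀ • w = s i₀ := by
          refine b.ext_elem fun j => ?_
          rw [map_smul, Finsupp.smul_apply, hreprw, smul_eq_mul]
          rcases eq_or_ne j j₀ with rfl | hne
          · have h1 : e' j₀ = (u:R) := by simp [he']
            rw [h1, ← hx₀def, hu, ← ha₀def]
            ring
          · have h1 : e' j = e j := by simp [he', hne]
            rw [h1]
            exact (he j).symm
        have hcoordw : b.repr w j₀ = (u : R) := by rw [hreprw]; simp [he']
        have hli : ∀ (cc : R), ∀ x ∈ N, cc • w + x = 0 → cc = 0 := by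
          intro cc x hxN hsum
          have h0 : b.coord j₀ (cc • w + x) = 0 := by rw [hsum, map_zero]
          rw [map_add, map_smul, Basis.coord_apply, hcoordw] at h0
          have hx0 : b.coord j₀ x = 0 := hxN
          rw [hx0, add_zero, smul_eq_mul] at h0
          exact (Units.mul_left_eq_zero u).mp h0
        have hsp : ∀ z : M, ∃ cc : R, z + cc • w ∈ N := by
          intro z
          refine ⟨-((u⁻¹ : Rˣ) * b.coord j₀ z), ?_⟩
          simp only [hNdef, LinearMap.mem_ker, map_add, map_smul, Basis.coord_apply, hcoordw,
            smul_eq_mul]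
          rw [← Basis.coord_apply]
          calc b.coord j₀ z + -((u⁻¹ : Rˣ) * b.coord j₀ z) * u
              = b.coord j₀ z - ((u:R) * (u⁻¹ : Rˣ)) * b.coord j₀ z := by ring
            _ = 0 := by rw [Units.mul_inv]; ring
        set F := Basis.mkFinCons (N := N) w f' hli hsp with hF
        refine ⟨F, Fin.cons a₀ a', ?_, ?_, ?_⟩
        · intro i
          induction i using Fin.cases with
          | zero => simpa using ha₀le
          | succ k => simpa using ha'le k
        · intro i hi
          induction i using Fin.cases with
          | zero => simp at hi
          | succ k =>
            simp only [Fin.cons_succ]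
            exact ha'tail k (by simpa [Fin.val_succ] using hi)
        · have hFfun : (fun i => π ^ (Fin.cons (α := fun _ => ℕ) a₀ a' i) • F i)
              = Fin.cons (π ^ a₀ • w) (fun k => π ^ a' k • (f' k : M)) := by
            funext i
            refine Fin.cases ?_ ?_ i
            · simp [hF, Basis.coe_mkFinCons]
            · intro k
              simp [hF, Basis.coe_mkFinCons]
          rw [hFfun, Fin.range_cons, hsmulw]
          have himg : (range fun k => π ^ a' k • (f' k : M))
              = N.subtype '' (range fun k => π ^ a' k • f' k) := by
            rw [← range_comp]
            rfl
          have himg2 : (range fun k => (t k : M)) = N.subtype '' (range t) := by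
            rw [← range_comp]
            rfl
          have hmapped : span R (range fun k => (t k : M))
              = span R (range fun k => π ^ a' k • (f' k : M)) := by
            rw [himg, himg2, Submodule.span_image, Submodule.span_image, hspan']
          have key1 : span R (range s) = span R (insert (s i₀) (range fun k => (t k : M))) := by
            refine le_antisymm ?_ ?_
            · rw [span_le]
              rintro _ ⟨l, rfl⟩
              rcases eq_or_ne l i₀ with rfl | hne
              · exact subset_span (mem_insert _ _)
              · obtain ⟨k, hk⟩ := Fin.exists_succAbove_eq hne
                have hsl : s l = (t k : M) + c l • s i₀ := by
                  rw [ht]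
                  simp only [hk]
                  abel
                rw [hsl]
                exact add_mem (subset_span (mem_insert_of_mem _ ⟨k, rfl⟩))
                  (Submodule.smul_mem _ _ (subset_span (mem_insert _ _)))
            · rw [span_le]
              rintro x hx
              rcases hx with rfl | ⟨k, rfl⟩
              · exact subset_span ⟨i₀, rfl⟩
              · rw [ht]
                exact sub_mem (subset_span ⟨i₀.succAbove k, rfl⟩)
                  (Submodule.smul_mem _ _ (subset_span ⟨i₀, rfl⟩))
          rw [key1, span_insert, span_insert, hmapped]

end SNF
end TrichotomyAux

section TrichotomyDedekind
open Submodule Set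
attribute [local instance] Classical.propDecidable
section Dedekind
variable {O : Type*} [CommRing O] [IsDomain O] [IsDedekindDomain O]
  {p : Ideal O} (hp : p.IsPrime) (hp0 : p ≠ ⊥) {r : ℕ} (hr : 1 ≤ r)

include hp hp0 in
theorem trichAux_exists_pi : ∃ π : O, π ∈ p ∧ π ∉ p ^ 2 := by
  have h2 : p ^ 2 < p := by
    have := Ideal.pow_right_strictAnti p hp0 hp.ne_top (show 1 < 2 by norm_num)
    simpa using this
  obtain ⟨π, h1, h2⟩ := SetLike.exists_of_lt h2
  exact ⟨π, h1, h2⟩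

include hp hp0 in
theorem trichAux_pi_sup_pow_eq (hr : 1 ≤ r) {π : O} (hπ1 : π ∈ p) (hπ2 : π ∉ p ^ 2) :
    Ideal.span {π} ⊔ p ^ r = p := by
  set K := Ideal.span {π} ⊔ p ^ r with hK
  have hKle : K ≤ p := sup_le ((Ideal.span_singleton_le_iff_mem p).mpr hπ1)
    (Ideal.pow_le_self (by omega) |>.trans le_rfl)
  have hdvd : K ∣ p ^ r := Ideal.dvd_iff_le.mpr le_sup_right
  obtain ⟨i, hi, hKi⟩ := (dvd_prime_pow (Ideal.prime_of_isPrime hp0 hp) r).mp hdvd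
  rw [associated_iff_eq] at hKi
  have hi1 : i ≤ 1 := by
    by_contra hcon
    push_neg at hcon
    have hπK : π ∈ K := Submodule.mem_sup_left (Ideal.subset_span rfl)
    rw [hKi] at hπK
    exact hπ2 (Ideal.pow_le_pow_right hcon hπK)
  have hi0 : i ≠ 0 := by
    rintro rfl
    rw [hKi] at hKle
    simp at hKle
    exact hp.ne_top hKle
  have : i = 1 := by omega
  rw [hKi, this, pow_one]

include hp hp0 in
theorem trichAux_pow_eq_span_sup (hr : 1 ≤ r) {π : O} (hπ1 : π ∈ p) (hπ2 : π ∉ p ^ 2)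
    {a : ℕ} (ha : a ≤ r) : p ^ a = Ideal.span {π ^ a} ⊔ p ^ r := by
  refine le_antisymm ?_ (sup_le ((Ideal.span_singleton_le_iff_mem _).mpr
    (Ideal.pow_mem_pow hπ1 a)) (Ideal.pow_le_pow_right ha))
  clear ha
  induction a with
  | zero => simp
  | succ a iha =>
    calc p ^ (a+1) = p ^ a * p := by rw [pow_succ]
      _ ≤ (Ideal.span {π ^ a} ⊔ p ^ r) * (Ideal.span {π} ⊔ p ^ r) :=
          Ideal.mul_mono iha (le_of_eq (trichAux_pi_sup_pow_eq hp hp0 hr hπ1 hπ2).symm)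
      _ ≤ Ideal.span {π ^ (a+1)} ⊔ p ^ r := by
          rw [Ideal.mul_sup, Ideal.sup_mul, Ideal.sup_mul]
          refine sup_le (sup_le ?_ ?_) (sup_le ?_ ?_)
          · rw [Ideal.span_singleton_mul_span_singleton, ← pow_succ]
            exact le_sup_left
          · exact le_trans Ideal.mul_le_left le_sup_right
          · exact le_trans Ideal.mul_le_right le_sup_right
          · exact le_trans Ideal.mul_le_right le_sup_right


include hp hp0 in
theorem trichAux_quot_facts (hr : 1 ≤ r) :
    ∃ πb : O ⧸ p ^ r, πb ^ r = 0 ∧ πb ^ (r-1) ≠ 0 ∧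
      ∀ x : O ⧸ p ^ r, ∃ (a : ℕ) (u : (O ⧸ p ^ r)ˣ), x = (u : (O ⧸ p ^ r)ˣ) * πb ^ a := by
  obtain ⟨π, hπ1, hπ2⟩ := trichAux_exists_pi hp hp0
  have hmax : p.IsMaximal := hp.isMaximal hp0
  refine ⟨Ideal.Quotient.mk (p ^ r) π, ?_, ?_, ?_⟩
  · rw [← map_pow, Ideal.Quotient.eq_zero_iff_mem]
    exact Ideal.pow_mem_pow hπ1 r
  · rw [← map_pow, Ne, Ideal.Quotient.eq_zero_iff_mem]
    intro hmem
    have h1 : p ^ (r-1) ≤ p ^ r := by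
      rw [trichAux_pow_eq_span_sup hp hp0 hr hπ1 hπ2 (Nat.sub_le r 1)]
      exact sup_le ((Ideal.span_singleton_le_iff_mem _).mpr hmem) le_rfl
    have h2 : p ^ r < p ^ (r - 1) :=
      Ideal.pow_right_strictAnti p hp0 hp.ne_top (by omega)
    exact (not_le_of_gt h2) h1
  · intro x
    obtain ⟨y, rfl⟩ := Ideal.Quotient.mk_surjective x
    obtain ⟨a, hale, hya, hnot'⟩ :
        ∃ a, a ≤ r ∧ y ∈ p ^ a ∧ (a < r → y ∉ p ^ (a + 1)) := by
      refine ⟨Nat.findGreatest (fun b => y ∈ p ^ b) r, Nat.findGreatest_le r,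
        Nat.findGreatest_spec (P := fun b => y ∈ p ^ b) (m := 0) (Nat.zero_le r) (by simp),
        fun hlt hmem => ?_⟩
      have h4 := Nat.le_findGreatest (P := fun b => y ∈ p ^ b) (Nat.succ_le_of_lt hlt) hmem
      omega
    by_cases har : a = r
    · refine ⟨r, 1, ?_⟩
      rw [Units.val_one, one_mul, ← map_pow]
      rw [Ideal.Quotient.eq]
      refine Ideal.sub_mem _ (har ▸ hya) (Ideal.pow_mem_pow hπ1 r)
    · have halt : a < r := lt_of_le_of_ne hale har
      have hnot : y ∉ p ^ (a + 1) := hnot' halt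
      have hy2 : y ∈ Ideal.span {π ^ a} ⊔ p ^ r := by
        rw [← trichAux_pow_eq_span_sup hp hp0 hr hπ1 hπ2 (le_of_lt halt)]
        exact hya
      obtain ⟨w, hw, z, hz, rfl⟩ := Submodule.mem_sup.mp hy2
      obtain ⟨c, rfl⟩ := Ideal.mem_span_singleton'.mp hw
      have hcp : c ∉ p := by
        intro hcp
        refine hnot ?_
        have h3 : c * π ^ a ∈ p ^ (a + 1) := by
          rw [pow_succ, mul_comm c (π ^ a)]
          exact Ideal.mul_mem_mul (Ideal.pow_mem_pow hπ1 a) hcp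
        exact Ideal.add_mem _ h3 (Ideal.pow_le_pow_right (by omega) hz)
      have hlt : p < p ⊔ Ideal.span {c} := by
        refine lt_of_le_of_ne le_sup_left (fun h => hcp ?_)
        have : c ∈ p ⊔ Ideal.span {c} :=
          Submodule.mem_sup_right (Ideal.subset_span rfl)
        rwa [← h] at this
      have hsup : p ⊔ Ideal.span {c} = ⊤ := hmax.out.2 _ hlt
      have hsup2 : p ^ r ⊔ Ideal.span {c} = ⊤ := Ideal.pow_sup_eq_top hsup
      rw [Ideal.eq_top_iff_one] at hsup2
      obtain ⟨zz, hzz, ww, hww, hone⟩ := Submodule.mem_sup.mp hsup2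
      obtain ⟨e, rfl⟩ := Ideal.mem_span_singleton'.mp hww
      have hunit : (Ideal.Quotient.mk (p ^ r) c) * (Ideal.Quotient.mk (p ^ r) e) = 1 := by
        rw [← map_mul]
        rw [show (1 : O ⧸ p ^ r) = Ideal.Quotient.mk (p ^ r) 1 from rfl]
        rw [Ideal.Quotient.eq]
        have : c * e - 1 = -zz := by linear_combination hone
        rw [this]
        exact neg_mem hzz
      refine ⟨a, Units.mkOfMulEqOne _ _ hunit, ?_⟩
      rw [Units.val_mkOfMulEqOne, map_add, ← map_pow, ← map_mul,
        Ideal.Quotient.eq_zero_iff_mem.mpr hz, add_zero]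

end Dedekind

end TrichotomyDedekind
section TrichotomyFinal
open Submodule Set Module

theorem trichAux_artinian {O : Type*} [CommRing O] [IsDomain O] [IsDedekindDomain O]
    {p : Ideal O} (hp : p.IsPrime) (hp0 : p ≠ ⊥) (r : ℕ) :
    IsArtinianRing (O ⧸ p ^ r) := by
  have hfin : {I : Ideal O | p ^ r ≤ I}.Finite := by
    have hsub : {I : Ideal O | p ^ r ≤ I} ⊆ (fun i => p ^ i) '' (Set.Iic r) := by
      intro I hI
      obtain ⟨i, hi, hIi⟩ := (dvd_prime_pow (Ideal.prime_of_isPrime hp0 hp) r).mp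
        (Ideal.dvd_iff_le.mpr hI)
      rw [associated_iff_eq] at hIi
      exact ⟨i, hi, hIi.symm⟩
    exact Set.Finite.subset ((Set.finite_Iic r).image _) hsub
  have hinj : Function.Injective
      (fun I : Ideal (O ⧸ p ^ r) => Ideal.comap (Ideal.Quotient.mk (p ^ r)) I) :=
    Ideal.comap_injective_of_surjective _ Ideal.Quotient.mk_surjective
  haveI : Finite {I : Ideal O // p ^ r ≤ I} := hfin.to_subtype
  haveI : Finite (Ideal (O ⧸ p ^ r)) := by
    refine Finite.of_injective (fun I : Ideal (O ⧸ p ^ r) =>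
      (⟨Ideal.comap (Ideal.Quotient.mk (p ^ r)) I, ?_⟩ : {I : Ideal O // p ^ r ≤ I})) ?_
    · conv_lhs => rw [← Ideal.mk_ker (I := p ^ r)]
      exact Ideal.ker_le_comap _
    · intro I J h
      apply hinj
      simpa using congrArg Subtype.val h
  have : Finite (Submodule (O ⧸ p ^ r) (O ⧸ p ^ r)) := this
  exact Finite.to_wellFoundedLT

theorem trichAux_span_free {R : Type*} [CommRing R] [Nontrivial R] {M : Type*} [AddCommGroup M]
    [Module R M] {n : ℕ} {g : Fin n → M} (hg : LinearIndependent R g) :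
    Module.Free R (span R (range g)) ∧ Module.finrank R ↥(span R (range g)) = n :=
  ⟨Module.Free.of_basis (Basis.span hg), by
    rw [finrank_eq_card_basis (Basis.span hg), Fintype.card_fin]⟩

end TrichotomyFinal
open Submodule Set Module in
set_option maxHeartbeats 2000000 in
/-- Trichotomy: for `V ≤ O_r^d` and `n < d`, letting `C` be the set of free rank-`n`
submodules containing `V`: if `V` is not `n`-generated then `C = ∅`; if `V` is free of
rank `n` then `C = {V}`; and if `V` is `n`-generated but not free of rank `n` then `C`
contains at least two distinct elements.  (These three cases are mutually exclusive and
exhaustive, so exactly one of them holds.) -/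
theorem trichotomy_free_overmodules
    (O : Type*) [CommRing O] [IsDomain O] [IsDedekindDomain O]
    (p : Ideal O) (hp : p.IsPrime) (hp0 : p ≠ ⊥) (r : ℕ) (hr : 1 ≤ r) (d n : ℕ)
    (hn : n < d) (V : Submodule (O ⧸ p ^ r) (Fin d → O ⧸ p ^ r)) :
    ((¬ ∃ s : Fin n → (Fin d → O ⧸ p ^ r),
        Submodule.span (O ⧸ p ^ r) (Set.range s) = V) →
      {W : Submodule (O ⧸ p ^ r) (Fin d → O ⧸ p ^ r) |
        (Module.Free (O ⧸ p ^ r) W ∧ Module.finrank (O ⧸ p ^ r) W = n) ∧ V ≤ W} = ∅) ∧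
    ((Module.Free (O ⧸ p ^ r) V ∧ Module.finrank (O ⧸ p ^ r) V = n) →
      {W : Submodule (O ⧸ p ^ r) (Fin d → O ⧸ p ^ r) |
        (Module.Free (O ⧸ p ^ r) W ∧ Module.finrank (O ⧸ p ^ r) W = n) ∧ V ≤ W} = {V}) ∧
    (((∃ s : Fin n → (Fin d → O ⧸ p ^ r),
        Submodule.span (O ⧸ p ^ r) (Set.range s) = V) ∧
      ¬ (Module.Free (O ⧸ p ^ r) V ∧ Module.finrank (O ⧸ p ^ r) V = n)) →
      ∃ W₁ W₂ : Submodule (O ⧸ p ^ r) (Fin d → O ⧸ p ^ r), W₁ ≠ W₂ ∧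
        W₁ ∈ {W : Submodule (O ⧸ p ^ r) (Fin d → O ⧸ p ^ r) |
          (Module.Free (O ⧸ p ^ r) W ∧ Module.finrank (O ⧸ p ^ r) W = n) ∧ V ≤ W} ∧
        W₂ ∈ {W : Submodule (O ⧸ p ^ r) (Fin d → O ⧸ p ^ r) |
          (Module.Free (O ⧸ p ^ r) W ∧ Module.finrank (O ⧸ p ^ r) W = n) ∧ V ≤ W}) := by
  classical
  obtain ⟨π, hπr, hπr1, H⟩ := trichAux_quot_facts hp hp0 hr
  have hptop : p ^ r ≠ ⊤ := by
    intro h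
    exact hp.ne_top (top_le_iff.mp (h ▸ Ideal.pow_le_self (by omega)))
  haveI : Nontrivial (O ⧸ p ^ r) := Ideal.Quotient.nontrivial_iff.mpr hptop
  haveI hart : IsArtinianRing (O ⧸ p ^ r) := trichAux_artinian hp hp0 r
  refine ⟨?_, ?_, ?_⟩
  · -- Part 1
    intro hgen
    rw [Set.eq_empty_iff_forall_notMem]
    rintro W ⟨⟨hWfree, hWrank⟩, hVW⟩
    apply hgen
    haveI := hWfree
    haveI : Module.Finite (O ⧸ p ^ r) W := inferInstance
    let bW : Basis (Fin n) (O ⧸ p ^ r) W :=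
      (Module.Free.chooseBasis _ W).reindex (Fintype.equivFinOfCardEq
        (by rw [← Module.finrank_eq_card_chooseBasisIndex, hWrank]))
    obtain ⟨m, sgen, hsgen⟩ := Submodule.fg_iff_exists_fin_generating_family.mp
      (IsNoetherian.noetherian (V.comap W.subtype))
    obtain ⟨f, a, -, -, hspan⟩ := trichAux_chain_snf π r hπr H m bW sgen
    refine ⟨fun i => ((π ^ a i • f i : W) : Fin d → O ⧸ p ^ r), ?_⟩
    have hVW' : Submodule.map W.subtype (V.comap W.subtype) = V := by
      rw [Submodule.map_comap_subtype]
      exact inf_eq_right.mpr hVW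
    have h2 : (range fun i => ((π ^ a i • f i : W) : Fin d → O ⧸ p ^ r))
        = W.subtype '' (range fun i => π ^ a i • f i) := by
      rw [← range_comp]; rfl
    rw [h2, Submodule.span_image, ← hspan, hsgen, hVW']
  · -- Part 2
    rintro ⟨hVfree, hVrank⟩
    ext W
    simp only [Set.mem_setOf_eq, Set.mem_singleton_iff]
    constructor
    · rintro ⟨⟨hWfree, hWrank⟩, hVW⟩
      haveI := hWfree
      haveI := hVfree
      haveI : Module.Finite (O ⧸ p ^ r) W := inferInstance
      haveI : Module.Finite (O ⧸ p ^ r) V := inferInstance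
      let bW : Basis (Fin n) (O ⧸ p ^ r) W :=
        (Module.Free.chooseBasis _ W).reindex (Fintype.equivFinOfCardEq
          (by rw [← Module.finrank_eq_card_chooseBasisIndex, hWrank]))
      let bV : Basis (Fin n) (O ⧸ p ^ r) V :=
        (Module.Free.chooseBasis _ V).reindex (Fintype.equivFinOfCardEq
          (by rw [← Module.finrank_eq_card_chooseBasisIndex, hVrank]))
      let eWV : W ≃ₗ[O ⧸ p ^ r] V := bW.equiv bV (Equiv.refl _)
      let incl : V →ₗ[O ⧸ p ^ r] W := Submodule.inclusion hVW
      have hinj : Function.Injective (incl ∘ₗ eWV.toLinearMap) := by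
        intro x y hxy
        simp only [LinearMap.comp_apply] at hxy
        exact eWV.injective (Submodule.inclusion_injective hVW hxy)
      have hsurj := IsArtinian.surjective_of_injective_endomorphism _ hinj
      refine le_antisymm ?_ hVW
      intro x hx
      obtain ⟨y, hy⟩ := hsurj ⟨x, hx⟩
      have h3 : ((incl (eWV y) : W) : Fin d → O ⧸ p ^ r) = x := congrArg Subtype.val hy
      have h4 : ((incl (eWV y) : W) : Fin d → O ⧸ p ^ r) = ((eWV y : V) : Fin d → O ⧸ p ^ r) :=
        rfl
      rw [← h3, h4]
      exact (eWV y).2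
    · rintro rfl
      exact ⟨⟨hVfree, hVrank⟩, le_rfl⟩
  · -- Part 3
    rintro ⟨⟨s, hs⟩, hVnf⟩
    obtain ⟨f, a, hale, htail, hspan⟩ := trichAux_chain_snf π r hπr H n
      (Pi.basisFun (O ⧸ p ^ r) (Fin d)) s
    rw [hs] at hspan
    by_cases hcase : ∀ i : Fin d, (i : ℕ) < n → a i = 0
    · exfalso
      apply hVnf
      have hVeq : V = span (O ⧸ p ^ r) (range fun k : Fin n => f (Fin.castLE hn.le k)) := by
        rw [hspan]
        refine le_antisymm ?_ ?_
        · rw [span_le]; rintro _ ⟨i, rfl⟩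
          show π ^ a i • f i ∈ _
          by_cases hin : (i : ℕ) < n
          · have h0 : a i = 0 := hcase i hin
            have h1 : π ^ a i • f i = f (Fin.castLE hn.le ⟨(i : ℕ), hin⟩) := by
              rw [h0, pow_zero, one_smul]
              congr 1
            rw [h1]
            exact subset_span ⟨⟨(i : ℕ), hin⟩, rfl⟩
          · have h0 : a i = r := htail i (by omega)
            rw [h0, hπr, zero_smul]
            exact zero_mem _
        · rw [span_le]; rintro _ ⟨k, rfl⟩
          show f (Fin.castLE hn.le k) ∈ _
          have h0 : a (Fin.castLE hn.le k) = 0 := hcase _ (by simp)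
          have h1 : f (Fin.castLE hn.le k) = π ^ a (Fin.castLE hn.le k) • f (Fin.castLE hn.le k) := by
            rw [h0, pow_zero, one_smul]
          rw [h1]
          exact subset_span ⟨Fin.castLE hn.le k, rfl⟩
      rw [hVeq]
      exact trichAux_span_free (f.linearIndependent.comp _ (Fin.castLE_injective hn.le))
    · push_neg at hcase
      obtain ⟨j, hjn, hja⟩ := hcase
      have haj_le : a j ≤ r := hale j
      have haj_pos : 1 ≤ a j := Nat.one_le_iff_ne_zero.mpr hja
      set jn : Fin d := ⟨n, hn⟩ with hjndef
      have hjnej : jn ≠ j := by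
        intro h
        have : (jn : ℕ) = (j : ℕ) := congrArg Fin.val h
        simp [hjndef] at this
        omega
      set cc : O ⧸ p ^ r := π ^ (r - a j) with hccdef
      have hccne : cc ≠ 0 := by
        intro h0
        apply hπr1
        have h1 : π ^ (r - 1) = π ^ (r - a j) * π ^ (a j - 1) := by
          rw [← pow_add]
          congr 1
          omega
        rw [h1, ← hccdef, h0, zero_mul]
      -- transvection
      set Nmap : (Fin d → O ⧸ p ^ r) →ₗ[O ⧸ p ^ r] (Fin d → O ⧸ p ^ r) :=
        (f.coord j).smulRight (cc • f jn) with hNmap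
      have hcoordjn : f.coord j (f jn) = 0 := by
        rw [Basis.coord_apply, Basis.repr_self_apply, if_neg hjnej]
      have hN2 : ∀ x, Nmap (Nmap x) = 0 := by
        intro x
        simp only [hNmap, LinearMap.smulRight_apply, map_smul, hcoordjn,
          smul_eq_mul, mul_zero, zero_smul, smul_zero]
      have hTinv : (LinearMap.id + Nmap).comp (LinearMap.id - Nmap) = LinearMap.id ∧
          (LinearMap.id - Nmap).comp (LinearMap.id + Nmap) = LinearMap.id := by
        constructor <;>
        · refine LinearMap.ext fun x => ?_
          simp only [LinearMap.comp_apply, LinearMap.add_apply, LinearMap.sub_apply,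
            LinearMap.id_apply, map_add, map_sub, hN2, sub_zero, add_zero]
          abel
      set T : (Fin d → O ⧸ p ^ r) ≃ₗ[O ⧸ p ^ r] (Fin d → O ⧸ p ^ r) :=
        LinearEquiv.ofLinear (LinearMap.id + Nmap) (LinearMap.id - Nmap)
          hTinv.1 hTinv.2 with hT
      set f2 : Basis (Fin d) (O ⧸ p ^ r) (Fin d → O ⧸ p ^ r) := f.map T with hf2def
      have hf2 : ∀ i, f2 i = if i = j then f j + cc • f jn else f i := by
        intro i
        rw [hf2def, Basis.map_apply, hT, LinearEquiv.ofLinear_apply]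
        simp only [LinearMap.add_apply, LinearMap.id_apply, hNmap,
          LinearMap.smulRight_apply, Basis.coord_apply, Basis.repr_self_apply]
        rcases eq_or_ne i j with rfl | hne
        · rw [if_pos rfl, if_pos rfl, one_smul]
        · rw [if_neg hne, if_neg hne, zero_smul, add_zero]
      set g1 : Fin n → (Fin d → O ⧸ p ^ r) := fun k => f (Fin.castLE hn.le k) with hg1
      set g2 : Fin n → (Fin d → O ⧸ p ^ r) := fun k => f2 (Fin.castLE hn.le k) with hg2
      set W₁ := span (O ⧸ p ^ r) (range g1) with hW₁
      set W₂ := span (O ⧸ p ^ r) (range g2) with hW₂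
      have hfree1 := trichAux_span_free (f.linearIndependent.comp _ (Fin.castLE_injective hn.le))
      have hfree2 := trichAux_span_free (f2.linearIndependent.comp _ (Fin.castLE_injective hn.le))
      have hVW1 : V ≤ W₁ := by
        rw [hspan, span_le]
        rintro _ ⟨i, rfl⟩
        show π ^ a i • f i ∈ _
        by_cases hin : (i : ℕ) < n
        · have h1 : f i = g1 ⟨(i : ℕ), hin⟩ := rfl
          rw [h1]
          exact Submodule.smul_mem _ _ (subset_span ⟨_, rfl⟩)
        · rw [htail i (by omega), hπr, zero_smul]
          exact zero_mem _
      have hVW2 : V ≤ W₂ := by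
        rw [hspan, span_le]
        rintro _ ⟨i, rfl⟩
        show π ^ a i • f i ∈ _
        by_cases hin : (i : ℕ) < n
        · rcases eq_or_ne i j with rfl | hne
          · have h1 : π ^ a i • f i = π ^ a i • g2 ⟨(i : ℕ), hin⟩ := by
              rw [show g2 ⟨(i : ℕ), hin⟩ = f2 i from rfl, hf2 i, if_pos rfl, smul_add,
                smul_smul, hccdef, ← pow_add,
                show a i + (r - a i) = r by omega, hπr, zero_smul, add_zero]
            rw [h1]
            exact Submodule.smul_mem _ _ (subset_span ⟨_, rfl⟩)
          · have h1 : f i = g2 ⟨(i : ℕ), hin⟩ := by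
              rw [show g2 ⟨(i : ℕ), hin⟩ = f2 i from rfl, hf2 i, if_neg hne]
            rw [h1]
            exact Submodule.smul_mem _ _ (subset_span ⟨_, rfl⟩)
        · rw [htail i (by omega), hπr, zero_smul]
          exact zero_mem _
      have hW1repr : ∀ x ∈ W₁, f.repr x jn = 0 := by
        intro x hx
        induction hx using Submodule.span_induction with
        | mem x hxx =>
          obtain ⟨k, rfl⟩ := hxx
          rw [show g1 k = f (Fin.castLE hn.le k) from rfl, Basis.repr_self_apply, if_neg]
          intro hkj
          have h5 : ((Fin.castLE hn.le k : Fin d) : ℕ) = n := by rw [hkj]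
          have h6 : ((Fin.castLE hn.le k : Fin d) : ℕ) = (k : ℕ) := rfl
          have hk2 := k.isLt
          omega
        | zero => simp
        | add x y _ _ hx hy => rw [map_add, Finsupp.add_apply, hx, hy, add_zero]
        | smul c x _ hx => rw [map_smul, Finsupp.smul_apply, hx, smul_zero]
      have hne12 : W₁ ≠ W₂ := by
        intro heq
        have hg2mem : g2 ⟨j, hjn⟩ ∈ W₁ := by
          rw [heq]
          exact subset_span ⟨_, rfl⟩
        have hval : f.repr (g2 ⟨(j : ℕ), hjn⟩) jn = cc := by
          rw [show g2 ⟨(j : ℕ), hjn⟩ = f2 j from rfl, hf2 j, if_pos rfl, map_add, map_smul,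
            Finsupp.add_apply, Finsupp.smul_apply, Basis.repr_self_apply, Basis.repr_self_apply,
            if_neg (fun h => hjnej h.symm), if_pos rfl, smul_eq_mul, mul_one, zero_add]
        rw [hW1repr _ hg2mem] at hval
        exact hccne hval.symm
      exact ⟨W₁, W₂, hne12, ⟨⟨hfree1.1, hfree1.2⟩, hVW1⟩, ⟨⟨hfree2.1, hfree2.2⟩, hVW2⟩⟩
end

section
/- If M ≤ O_r^d is of type (m; k_1,...,k_t), then the orthogonal complement M^⊥ = {w ∈ O_r^d : ⟨v,w⟩ = 0 for all v ∈ M} with respect to the standard bilinear form is of type (d-m-t; r-k_t,..., r-k_1). -/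
open Finset

/-- The standard bilinear form `⟨v,w⟩ = Σ i, v i * w i` on `R^d`. -/
def stdBilin (R : Type*) [CommRing R] (d : ℕ) :
    LinearMap.BilinForm R (Fin d → R) :=
  LinearMap.mk₂ R (fun v w => ∑ i, v i * w i)
    (by intro m₁ m₂ n; simp [add_mul, Finset.sum_add_distrib])
    (by intro c m n; simp [Finset.mul_sum, mul_assoc])
    (by intro m n₁ n₂; simp [mul_add, Finset.sum_add_distrib])
    (by intro c m n; simp [Finset.mul_sum, mul_comm, mul_left_comm])

section Aux

variable {R : Type*} [CommRing R] {d : ℕ}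

lemma stdBilin_apply (v w : Fin d → R) : stdBilin R d v w = ∑ i, v i * w i := rfl

/-- The orthogonal complement of a product of ideals is the product of annihilators. -/
lemma orthogonal_pi (I : Fin d → Ideal R) :
    (stdBilin R d).orthogonal (Submodule.pi Set.univ fun i => (I i : Submodule R R)) =
      Submodule.pi Set.univ
        (fun i => ((I i : Submodule R R).annihilator : Submodule R R)) := by
  ext w
  rw [LinearMap.BilinForm.mem_orthogonal_iff, Submodule.mem_pi]
  constructor
  · intro h i _
    rw [Submodule.mem_annihilator]
    intro a ha
    have hv : (Pi.single i a : Fin d → R) ∈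
        Submodule.pi Set.univ fun j => (I j : Submodule R R) := by
      intro j _
      rcases eq_or_ne j i with rfl | hj
      · simpa using ha
      · simp [Pi.single_apply, hj]
    have h0 := h _ hv
    rw [stdBilin_apply] at h0
    rw [Finset.sum_eq_single i (fun j _ hj => by simp [Pi.single_apply, hj])
      (fun hi => absurd (Finset.mem_univ i) hi)] at h0
    simpa [mul_comm] using h0
  · intro h v hv
    rw [stdBilin_apply]
    refine Finset.sum_eq_zero fun i _ => ?_
    have := Submodule.mem_annihilator.mp (h i (Set.mem_univ i)) (v i)
      (hv i (Set.mem_univ i))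
    simpa [mul_comm] using this

/-- The "transpose" of an automorphism of `R^d`, as an automorphism. -/
noncomputable def transposeEquiv (f : (Fin d → R) ≃ₗ[R] (Fin d → R)) :
    (Fin d → R) ≃ₗ[R] (Fin d → R) :=
  LinearEquiv.ofLinear
    (Matrix.toLin' (LinearMap.toMatrix' (f : (Fin d → R) →ₗ[R] (Fin d → R))).transpose)
    (Matrix.toLin' (LinearMap.toMatrix' (f.symm : (Fin d → R) →ₗ[R] (Fin d → R))).transpose)
    (by
      rw [← Matrix.toLin'_mul, ← Matrix.transpose_mul, ← LinearMap.toMatrix'_comp]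
      simp [LinearEquiv.comp_coe])
    (by
      rw [← Matrix.toLin'_mul, ← Matrix.transpose_mul, ← LinearMap.toMatrix'_comp]
      simp [LinearEquiv.comp_coe])

lemma stdBilin_mulVec (A : Matrix (Fin d) (Fin d) R) (v w : Fin d → R) :
    stdBilin R d (A.mulVec v) w = stdBilin R d v (A.transpose.mulVec w) := by
  show dotProduct (A.mulVec v) w = dotProduct v (A.transpose.mulVec w)
  rw [Matrix.dotProduct_mulVec, Matrix.vecMul_transpose]

lemma transposeEquiv_adjoint (f : (Fin d → R) ≃ₗ[R] (Fin d → R)) (v w : Fin d → R) :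
    stdBilin R d (f v) w = stdBilin R d v (transposeEquiv f w) := by
  have hfv : (f v : Fin d → R) =
      (LinearMap.toMatrix' (f : (Fin d → R) →ₗ[R] (Fin d → R))).mulVec v := by
    rw [← Matrix.toLin'_apply, Matrix.toLin'_toMatrix']; rfl
  have hTw : (transposeEquiv f w : Fin d → R) =
      (LinearMap.toMatrix' (f : (Fin d → R) →ₗ[R] (Fin d → R))).transpose.mulVec w := by
    rw [← Matrix.toLin'_apply]; rfl
  rw [hfv, hTw, stdBilin_mulVec]

/-- Mapping a product submodule under the coordinate-reversal equivalence. -/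
lemma map_revEquiv_pi (I : Fin d → Submodule R R) :
    Submodule.map ((LinearEquiv.funCongrLeft R R (Fin.revPerm : Equiv.Perm (Fin d))) :
        (Fin d → R) →ₗ[R] (Fin d → R)) (Submodule.pi Set.univ I) =
      Submodule.pi Set.univ (fun i => I i.rev) := by
  ext x
  rw [Submodule.mem_map_equiv, Submodule.mem_pi, Submodule.mem_pi]
  constructor
  · intro h i _
    have := h i.rev (Set.mem_univ _)
    simpa [LinearEquiv.funCongrLeft, Fin.rev_rev] using this
  · intro h i _
    have := h i.rev (Set.mem_univ _)
    simpa [LinearEquiv.funCongrLeft, Fin.rev_rev] using this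

end Aux

/-- The annihilator of `p^e/p^r` in `O/p^r` is `p^(r-e)/p^r`. -/
lemma annihilator_map_pow {O : Type*} [CommRing O] [IsDomain O] [IsDedekindDomain O]
    (p : Ideal O) (hp0 : p ≠ ⊥) (r e : ℕ) (he : e ≤ r) :
    ((Ideal.map (Ideal.Quotient.mk (p ^ r)) (p ^ e) : Ideal (O ⧸ p ^ r)) :
        Submodule (O ⧸ p ^ r) (O ⧸ p ^ r)).annihilator =
      (Ideal.map (Ideal.Quotient.mk (p ^ r)) (p ^ (r - e)) : Ideal (O ⧸ p ^ r)) := by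
  have hle' : p ^ r ≤ p ^ (r - e) := Ideal.pow_le_pow_right (Nat.sub_le r e)
  have hpne : (p : Ideal O) ≠ 0 := by rwa [Ideal.zero_eq_bot]
  have hfact : p ^ (r - e) * p ^ e = p ^ r := by
    rw [← pow_add, Nat.sub_add_cancel he]
  ext x
  obtain ⟨y, rfl⟩ := Ideal.Quotient.mk_surjective x
  rw [Submodule.mem_annihilator, Ideal.mem_quotient_iff_mem hle']
  constructor
  · intro h
    have hle2 : Ideal.span {y} * p ^ e ≤ p ^ r := by
      rw [Ideal.mul_le]
      intro a ha b hb
      rw [Ideal.mem_span_singleton] at ha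
      obtain ⟨c, rfl⟩ := ha
      have hb' : (Ideal.Quotient.mk (p ^ r)) b ∈
          Ideal.map (Ideal.Quotient.mk (p ^ r)) (p ^ e) :=
        Ideal.mem_map_of_mem _ hb
      have := h _ hb'
      have hyb : y * b ∈ p ^ r := by
        rwa [smul_eq_mul, ← map_mul, Ideal.Quotient.eq_zero_iff_mem] at this
      have : y * c * b = c * (y * b) := by ring
      rw [this]
      exact Ideal.mul_mem_left _ _ hyb
    have hdvd : p ^ (r - e) * p ^ e ∣ Ideal.span {y} * p ^ e := by
      rw [hfact, Ideal.dvd_iff_le]; exact hle2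
    have hdvd' : p ^ (r - e) ∣ Ideal.span {y} :=
      (mul_dvd_mul_iff_right (pow_ne_zero e hpne)).mp hdvd
    have : Ideal.span {y} ≤ p ^ (r - e) := Ideal.le_of_dvd hdvd'
    exact this (Ideal.mem_span_singleton_self y)
  · intro hy n hn
    rw [Ideal.mem_map_iff_of_surjective _ Ideal.Quotient.mk_surjective] at hn
    obtain ⟨b, hb, rfl⟩ := hn
    rw [smul_eq_mul, ← map_mul, Ideal.Quotient.eq_zero_iff_mem, ← hfact]
    exact Ideal.mul_mem_mul hy hb

/-- If `M ≤ O_r^d` is of type `(m; k_1,…,k_t)` (exponent function `e`), then its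
orthogonal complement w.r.t. the standard bilinear form is of type
`(d-m-t; r-k_t,…,r-k_1)` (exponent function `i ↦ r - e (rev i)`). -/
theorem orthogonal_complement_type
    (O : Type*) [CommRing O] [IsDomain O] [IsDedekindDomain O]
    (p : Ideal O) (hp : p.IsPrime) (hp0 : p ≠ ⊥) (r : ℕ) (hr : 1 ≤ r)
    (d m t : ℕ) (hmt : m + t ≤ d)
    (e : Fin d → ℕ)
    (he0 : ∀ i : Fin d, (i : ℕ) < m → e i = 0)
    (hemid : ∀ i : Fin d, m ≤ (i : ℕ) → (i : ℕ) < m + t → 0 < e i ∧ e i < r)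
    (hetail : ∀ i : Fin d, m + t ≤ (i : ℕ) → e i = r)
    (M : Submodule (O ⧸ p ^ r) (Fin d → O ⧸ p ^ r))
    (hM : ∃ g : (Fin d → O ⧸ p ^ r) ≃ₗ[O ⧸ p ^ r] (Fin d → O ⧸ p ^ r),
      Submodule.map (g : (Fin d → O ⧸ p ^ r) →ₗ[O ⧸ p ^ r] (Fin d → O ⧸ p ^ r)) M =
        Submodule.pi Set.univ
          (fun i => (Ideal.map (Ideal.Quotient.mk (p ^ r)) (p ^ e i) :
            Submodule (O ⧸ p ^ r) (O ⧸ p ^ r)))) :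
    ∃ g : (Fin d → O ⧸ p ^ r) ≃ₗ[O ⧸ p ^ r] (Fin d → O ⧸ p ^ r),
      Submodule.map (g : (Fin d → O ⧸ p ^ r) →ₗ[O ⧸ p ^ r] (Fin d → O ⧸ p ^ r))
          ((stdBilin (O ⧸ p ^ r) d).orthogonal M) =
        Submodule.pi Set.univ
          (fun i => (Ideal.map (Ideal.Quotient.mk (p ^ r)) (p ^ (r - e i.rev)) :
            Submodule (O ⧸ p ^ r) (O ⧸ p ^ r))) := by
  classical
  set R := O ⧸ p ^ r with hR
  obtain ⟨g, hg⟩ := hM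
  have heler : ∀ i : Fin d, e i ≤ r := by
    intro i
    rcases lt_or_ge (i : ℕ) m with h1 | h1
    · rw [he0 i h1]; exact Nat.zero_le r
    rcases lt_or_ge (i : ℕ) (m + t) with h2 | h2
    · exact le_of_lt (hemid i h1 h2).2
    · rw [hetail i h2]
  -- the adjoint of g.symm
  set T := transposeEquiv g.symm with hT
  -- step 1: T maps M^⊥ to (g M)^⊥
  have hstep1 : Submodule.map (T : (Fin d → R) →ₗ[R] (Fin d → R))
      ((stdBilin R d).orthogonal M) =
      (stdBilin R d).orthogonal
        (Submodule.map (g : (Fin d → R) →ₗ[R] (Fin d → R)) M) := by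
    ext x
    rw [Submodule.mem_map_equiv, LinearMap.BilinForm.mem_orthogonal_iff,
      LinearMap.BilinForm.mem_orthogonal_iff]
    constructor
    · intro h n hn
      rw [Submodule.mem_map] at hn
      obtain ⟨v, hv, rfl⟩ := hn
      have := h v hv
      have key := transposeEquiv_adjoint g.symm (g v) (T.symm x)
      rw [LinearEquiv.symm_apply_apply, ← hT, LinearEquiv.apply_symm_apply] at key
      rw [key] at this
      exact this
    · intro h v hv
      have hgv : (g : (Fin d → R) →ₗ[R] (Fin d → R)) v ∈
          Submodule.map (g : (Fin d → R) →ₗ[R] (Fin d → R)) M :=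
        Submodule.mem_map_of_mem hv
      have := h _ hgv
      have key := transposeEquiv_adjoint g.symm (g v) (T.symm x)
      rw [LinearEquiv.symm_apply_apply, ← hT, LinearEquiv.apply_symm_apply] at key
      rw [key]
      exact this
  -- step 2: orthogonal of the standard product
  have hstep2 : (stdBilin R d).orthogonal
      (Submodule.map (g : (Fin d → R) →ₗ[R] (Fin d → R)) M) =
      Submodule.pi Set.univ
        (fun i => (Ideal.map (Ideal.Quotient.mk (p ^ r)) (p ^ (r - e i)) :
          Submodule R R)) := by
    rw [hg, orthogonal_pi (fun i => Ideal.map (Ideal.Quotient.mk (p ^ r)) (p ^ e i))]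
    congr 1
    funext i
    exact annihilator_map_pow p hp0 r (e i) (heler i)
  -- combine with the reversal
  refine ⟨T ≪≫ₗ LinearEquiv.funCongrLeft R R (Fin.revPerm : Equiv.Perm (Fin d)), ?_⟩
  have hcomp : ((T ≪≫ₗ LinearEquiv.funCongrLeft R R (Fin.revPerm : Equiv.Perm (Fin d))) :
      (Fin d → R) →ₗ[R] (Fin d → R)) =
      ((LinearEquiv.funCongrLeft R R (Fin.revPerm : Equiv.Perm (Fin d))) :
        (Fin d → R) →ₗ[R] (Fin d → R)) ∘ₗ (T : (Fin d → R) →ₗ[R] (Fin d → R)) := rfl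
  rw [hcomp, Submodule.map_comp, hstep1, hstep2, map_revEquiv_pi]
end

section
/- For d ≥ 3 and r ≥ 2, the pair (B, N), where B ≤ GL_d(O_r) is the group of upper triangular invertible matrices and N the group of monomial matrices, is not a Tits (B,N)-pair: there exist s in the set of simple transposition permutation matrices and w in the Weyl group with sBw not contained in BswB ∪ BwB. -/
open Matrix

/-- `g ∈ GL_d(R)` is upper triangular. -/
def IsUpperTriGL {d : ℕ} {R : Type*} [CommRing R] (g : GL (Fin d) R) : Prop :=
  ∀ i j : Fin d, j < i → (g : Matrix (Fin d) (Fin d) R) i j = 0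

/-- `g ∈ GL_d(R)` is a monomial matrix. -/
def IsMonomialGL {d : ℕ} {R : Type*} [CommRing R] (g : GL (Fin d) R) : Prop :=
  ∃ (σ : Equiv.Perm (Fin d)) (u : Fin d → Rˣ),
    ∀ i j : Fin d, (g : Matrix (Fin d) (Fin d) R) i j = if i = σ j then (u j : R) else 0

/-- `g ∈ GL_d(R)` is the permutation matrix of a simple transposition `(i i+1)`. -/
def IsSimpleTranspositionGL {d : ℕ} {R : Type*} [CommRing R] (g : GL (Fin d) R) : Prop :=
  ∃ (i : Fin d) (h : (i : ℕ) + 1 < d), ∀ a b : Fin d,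
    (g : Matrix (Fin d) (Fin d) R) a b =
      if (Equiv.swap i ⟨(i : ℕ) + 1, h⟩) a = b then 1 else 0

/-- Diagonal entries of an invertible upper triangular matrix are units. -/
lemma diag_isUnit_of_upperTri {d : ℕ} {R : Type*} [CommRing R]
    (g : GL (Fin d) R) (hg : IsUpperTriGL g) (i : Fin d) :
    IsUnit ((g : Matrix (Fin d) (Fin d) R) i i) := by
  have hdet : IsUnit (g : Matrix (Fin d) (Fin d) R).det :=
    (Matrix.isUnit_iff_isUnit_det _).mp ⟨g, rfl⟩
  have htri : (g : Matrix (Fin d) (Fin d) R).BlockTriangular id :=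
    fun i j h => hg i j h
  rw [Matrix.det_of_upperTriangular htri] at hdet
  exact isUnit_of_dvd_unit
    (Finset.dvd_prod_of_mem (fun j => (g : Matrix (Fin d) (Fin d) R) j j) (Finset.mem_univ i)) hdet

/-- For `d ≥ 3` and `r ≥ 2`, the pair `(B,N)` in `GL_d(O_r)` (upper triangular and
monomial matrices) is not a Tits (B,N)-pair: there are a simple transposition matrix `s`
and a monomial matrix `w` with `sBw ⊄ BswB ∪ BwB`. -/
theorem not_BN_pair
    (O : Type*) [CommRing O] [IsDomain O] [IsDedekindDomain O]
    (p : Ideal O) (hp : p.IsPrime) (hp0 : p ≠ ⊥) (r : ℕ) (hr : 2 ≤ r)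
    (d : ℕ) (hd : 3 ≤ d) :
    ∃ s w : GL (Fin d) (O ⧸ p ^ r),
      IsSimpleTranspositionGL s ∧ IsMonomialGL w ∧
      ¬ ({x : GL (Fin d) (O ⧸ p ^ r) | ∃ b, IsUpperTriGL b ∧ x = s * b * w} ⊆
          {x | ∃ b₁ b₂, IsUpperTriGL b₁ ∧ IsUpperTriGL b₂ ∧ x = b₁ * (s * w) * b₂} ∪
          {x | ∃ b₁ b₂, IsUpperTriGL b₁ ∧ IsUpperTriGL b₂ ∧ x = b₁ * w * b₂}) := by
  classical
  set R := O ⧸ p ^ r with hR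
  -- a uniformiser
  have hlt : p ^ 2 < p ^ 1 := Ideal.pow_succ_lt_pow hp0 1
  obtain ⟨π₀, hπ₀p, hπ₀p2⟩ := SetLike.exists_of_lt hlt
  rw [pow_one] at hπ₀p
  set π : R := Ideal.Quotient.mk (p ^ r) π₀ with hπdef
  have hπ0 : π ≠ 0 := by
    intro h
    rw [hπdef, Ideal.Quotient.eq_zero_iff_mem] at h
    exact hπ₀p2 (Ideal.pow_le_pow_right hr h)
  have hπu : ¬ IsUnit π := by
    rintro ⟨v, hv⟩
    obtain ⟨c₀, hc₀⟩ := Ideal.Quotient.mk_surjective (I := p ^ r) (v⁻¹ : Rˣ)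
    have h1 : π₀ * c₀ - 1 ∈ p ^ r := by
      rw [← Ideal.Quotient.eq_zero_iff_mem, map_sub, _root_.map_mul, hc₀, _root_.map_one,
        show Ideal.Quotient.mk (p ^ r) π₀ = π from rfl, ← hv, v.mul_inv, sub_self]
    have h2 : π₀ * c₀ - 1 ∈ p := Ideal.pow_le_self (by omega) h1
    have h3 : π₀ * c₀ ∈ p := Ideal.mul_mem_right _ _ hπ₀p
    have h4 : (1 : O) ∈ p := by
      have := Ideal.sub_mem p h3 h2
      simpa using this
    exact hp.ne_top (Ideal.eq_top_of_isUnit_mem _ h4 isUnit_one)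
  -- indices
  set i0 : Fin d := ⟨0, by omega⟩ with hi0
  set i1 : Fin d := ⟨1, by omega⟩ with hi1
  have hi01 : i0 < i1 := by simp [hi0, hi1, Fin.lt_def]
  have hne : i0 ≠ i1 := ne_of_lt hi01
  set σ : Equiv.Perm (Fin d) := Equiv.swap i0 i1 with hσ
  -- permutation matrix S
  set S : Matrix (Fin d) (Fin d) R := Matrix.of fun a b => if σ a = b then 1 else 0 with hS
  have hSmul : ∀ M : Matrix (Fin d) (Fin d) R, ∀ a b, (S * M) a b = M (σ a) b := by
    intro M a b
    simp [hS, Matrix.mul_apply]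
  have hmulS : ∀ M : Matrix (Fin d) (Fin d) R, ∀ a b, (M * S) a b = M a (σ b) := by
    intro M a b
    rw [Matrix.mul_apply]
    have hiff : ∀ k : Fin d, (σ k = b) ↔ (k = σ b) := by
      intro k
      constructor
      · rintro rfl; simp [hσ]
      · rintro rfl; simp [hσ]
    calc (∑ k, M a k * S k b) = ∑ k, M a k * if k = σ b then 1 else 0 := by
          refine Finset.sum_congr rfl fun k _ => ?_
          simp [hS, hiff k]
      _ = M a (σ b) := by simp
  have hSS : S * S = 1 := by
    ext a b
    rw [hSmul]
    simp [hS, Matrix.one_apply, hσ, Equiv.swap_apply_self]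
  set s : GL (Fin d) R := ⟨S, S, hSS, hSS⟩ with hs
  -- the unipotent b = 1 + π E₀₁
  set E : Matrix (Fin d) (Fin d) R := Matrix.single i0 i1 π with hE
  have hEE : E * E = 0 := Matrix.single_mul_single_of_ne (i := i0) (j := i1) (k := i0) (c := π) (Ne.symm hne) π
  have hinv1 : (1 + E) * (1 - E) = 1 := by
    rw [mul_sub, add_mul, add_mul, hEE]
    simp
  have hinv2 : (1 - E) * (1 + E) = 1 := by
    rw [sub_mul, mul_add, mul_add, hEE]
    simp
  set b : GL (Fin d) R := ⟨1 + E, 1 - E, hinv1, hinv2⟩ with hb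
  have hbtri : IsUpperTriGL b := by
    intro i j hij
    have h1 : i ≠ j := (ne_of_lt hij).symm
    have h2 : ¬(i = i0 ∧ j = i1) := by
      rintro ⟨rfl, rfl⟩
      exact absurd hij (not_lt.mpr hi01.le)
    show ((1 : Matrix (Fin d) (Fin d) R) + E) i j = 0
    rw [Matrix.add_apply, Matrix.one_apply_ne h1, hE, Matrix.single]
    simp only [Matrix.of_apply]
    rw [if_neg (by tauto), add_zero]
  refine ⟨s, s, ?_, ?_, ?_⟩
  · -- simple transposition
    refine ⟨i0, by omega, fun a c => ?_⟩
    have : (⟨(i0 : ℕ) + 1, by omega⟩ : Fin d) = i1 := by simp [hi0, hi1]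
    rw [this]
    rfl
  · -- monomial
    refine ⟨σ, fun _ => 1, fun i j => ?_⟩
    show (if σ i = j then (1 : R) else 0) = if i = σ j then 1 else 0
    congr 1
    simp only [eq_iff_iff]
    constructor
    · rintro rfl; simp [hσ]
    · rintro rfl; simp [hσ]
  · -- the BN axiom fails
    intro hsub
    have hx : s * b * s ∈ {x : GL (Fin d) R | ∃ b', IsUpperTriGL b' ∧ x = s * b' * s} :=
      ⟨b, hbtri, rfl⟩
    -- the key entry of x = s b s
    have hxval : ((s * b * s : GL (Fin d) R) : Matrix (Fin d) (Fin d) R) i1 i0 = π := by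
      show (S * (1 + E) * S) i1 i0 = π
      rw [hmulS, hSmul]
      have h1 : σ i1 = i0 := by simp [hσ]
      have h2 : σ i0 = i1 := by simp [hσ]
      rw [h1, h2, Matrix.add_apply, Matrix.one_apply_ne hne, hE, Matrix.single]
      simp
    rcases hsub hx with hcase | hcase
    · -- x = b₁ (s s) b₂ : entry (1,0) of product of upper triangulars is 0
      obtain ⟨b₁, b₂, hb₁, hb₂, heq⟩ := hcase
      have hss : ((s * s : GL (Fin d) R) : Matrix (Fin d) (Fin d) R) = 1 := hSS
      have hrhs : ((b₁ * (s * s) * b₂ : GL (Fin d) R) : Matrix (Fin d) (Fin d) R) i1 i0 = 0 := by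
        show ((b₁ : Matrix (Fin d) (Fin d) R) * ((s * s : GL (Fin d) R) : Matrix (Fin d) (Fin d) R)
            * (b₂ : Matrix (Fin d) (Fin d) R)) i1 i0 = 0
        rw [hss, mul_one, Matrix.mul_apply]
        refine Finset.sum_eq_zero fun k _ => ?_
        by_cases hk : k < i1
        · rw [hb₁ i1 k hk, zero_mul]
        · have : i0 < k := lt_of_lt_of_le hi01 (not_lt.mp hk)
          rw [hb₂ k i0 this, mul_zero]
      rw [heq, hrhs] at hxval
      exact hπ0 hxval.symm
    · -- x = b₁ s b₂ : entry (1,0) is a unit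
      obtain ⟨b₁, b₂, hb₁, hb₂, heq⟩ := hcase
      have hrhs : ((b₁ * s * b₂ : GL (Fin d) R) : Matrix (Fin d) (Fin d) R) i1 i0 =
          (b₁ : Matrix (Fin d) (Fin d) R) i1 i1 * (b₂ : Matrix (Fin d) (Fin d) R) i0 i0 := by
        show ((b₁ : Matrix (Fin d) (Fin d) R) * S * (b₂ : Matrix (Fin d) (Fin d) R)) i1 i0 = _
        rw [Matrix.mul_apply]
        rw [Finset.sum_eq_single i0]
        · rw [hmulS]
          have h2 : σ i0 = i1 := by simp [hσ]
          rw [h2]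
        · intro k _ hk
          have hk0 : i0 < k := by
            rw [hi0, Fin.lt_def]
            have := Fin.val_ne_of_ne hk
            simp [hi0] at this ⊢
            omega
          rw [hb₂ k i0 hk0, mul_zero]
        · intro h; exact absurd (Finset.mem_univ i0) h
      rw [heq, hrhs] at hxval
      exact hπu (hxval ▸ (diag_isUnit_of_upperTri b₁ hb₁ i1).mul
        (diag_isUnit_of_upperTri b₂ hb₂ i0))
end
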